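/- arXiv:1602.06119 — 3 statements merged into one kernel-verified Lean document; each statement's English description precedes it below -/
import Mathlib

section
/- For every 1 ≤ p < ∞ there is a constant C > 0 (depending only on α and p) such that for all measurable f : ℝ₊ → ℂ, the discrete amalgam norm is dominated by the continuous one: ‖f‖_{p,∞} ≤ C·sup_{y ∈ ℝ₊} (∫_0^∞ |f(x)|^p·(τ_y 1_{[0,1]})(x)·x^{2α+1} dx)^{1/p}. -/
open MeasureTheory Real Set ENNReal ComplexOrder

noncomputable section

/-- The Haar measure `ω_α(dz) = z^(2α+1) dz` of the Bessel–Kingman hypergroup,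
supported on `(0, ∞)`. -/
def omegaM (α : ℝ) : Measure ℝ :=
  (volume.restrict (Set.Ioi (0:ℝ))).withDensity fun z => ENNReal.ofReal (z ^ (2*α+1))

/-- The interval `I_{n+1} = [n, n+1)` (0-based reindexing of the paper's `I_n = [n-1, n)`). -/
def In (n : ℕ) : Set ℝ := Set.Ico (n : ℝ) ((n : ℝ) + 1)

/-- `ω_α`-measure of the `n`-th interval. -/
def wn (α : ℝ) (n : ℕ) : ℝ≥0∞ := omegaM α (In n)

/-- The discrete amalgam norm `‖f‖_{p,q}` (with the conventions of the paper for
`p = ∞` or `q = ∞`, where the corresponding integral/sum becomes a supremum). -/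
def amalgamNorm (α : ℝ) (p q : ℝ≥0∞) {E : Type*} [NormedAddCommGroup E] (f : ℝ → E) : ℝ≥0∞ :=
  let A : ℕ → ℝ≥0∞ := fun n =>
    if p = ∞ then ⨆ x ∈ In n, (‖f x‖₊ : ℝ≥0∞)
    else ((wn α n)⁻¹ * ∫⁻ x in In n, (‖f x‖₊ : ℝ≥0∞) ^ p.toReal ∂(omegaM α)) ^ (1/p.toReal)
  if q = ∞ then ⨆ n, A n
  else (∑' n, wn α n * (A n) ^ q.toReal) ^ (1/q.toReal)

/-- The constant `C_Γ = Γ(α+1)/(Γ(1/2)·Γ(α+1/2)·2^(2α-1))`. -/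
def CGamma (α : ℝ) : ℝ :=
  Real.Gamma (α+1) / (Real.Gamma (1/2) * Real.Gamma (α+1/2) * (2:ℝ) ^ (2*α-1))

/-- The Bessel–Kingman kernel `K_α(x,y,z)`. -/
def Kker (α x y z : ℝ) : ℝ :=
  CGamma α * ((z^2 - (x-y)^2) * ((x+y)^2 - z^2)) ^ (α - 1/2) / (x*y*z) ^ (2*α)

/-- The hypergroup translation `τ_y f(x)`, with the conventions `τ_0 f = f` and
`τ_y f(0) = f(y)`. -/
def tau {E : Type*} [NormedAddCommGroup E] [NormedSpace ℝ E]
    (α y : ℝ) (f : ℝ → E) (x : ℝ) : E :=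
  if y = 0 then f x
  else if x = 0 then f y
  else ∫ z in |x - y|..(x + y), (Kker α x y z * z ^ (2*α+1)) • f z

/-- The hypergroup convolution `(f ⊛ g)(x) = ∫_0^∞ f(y)·τ_y g(x)·y^(2α+1) dy`. -/
def convBK (α : ℝ) (f g : ℝ → ℂ) (x : ℝ) : ℂ :=
  ∫ y in Set.Ioi (0:ℝ), (y ^ (2*α+1)) • (f y * tau α y g x)

/-- The modified Bessel function `j_α`. -/
def jBessel (α x : ℝ) : ℝ :=
  ∑' k : ℕ, (-1)^k * Real.Gamma (α+1) / (2^(2*k) * (k.factorial : ℝ) * Real.Gamma (α + k + 1))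
    * x^(2*k)

/-- The hypergroup Fourier transform `f̂(λ) = ∫_0^∞ f(x)·j_α(λx)·x^(2α+1) dx`. -/
def fourierBK (α : ℝ) (f : ℝ → ℂ) (lam : ℝ) : ℂ :=
  ∫ x in Set.Ioi (0:ℝ), (jBessel α (lam * x) * x ^ (2*α+1)) • f x

/-- The continuous `(p,∞)`-amalgam norm
`sup_{y ≥ 0} (∫_0^∞ |f(x)|^p · τ_y 1_{[0,1]}(x) · x^(2α+1) dx)^(1/p)`. -/
def contNorm (α p : ℝ) {E : Type*} [NormedAddCommGroup E] (f : ℝ → E) : ℝ≥0∞ :=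
  ⨆ y ∈ Set.Ici (0:ℝ),
    (∫⁻ x, (‖f x‖₊ : ℝ≥0∞) ^ p *
        ENNReal.ofReal (tau α y ((Set.Icc (0:ℝ) 1).indicator 1) x) ∂(omegaM α)) ^ (1/p)

/-- The weight `ω_n = ∫_{n-1}^{n} z^(2α+1) dz`, as a real number. -/
def wIn (α : ℝ) (n : ℕ) : ℝ := ∫ z in ((n:ℝ)-1)..(n:ℝ), z ^ (2*α+1)

lemma CGamma_pos {α : ℝ} (hα : 1/2 ≤ α) : 0 < CGamma α := by
  have h1 : 0 < Real.Gamma (α+1) := Real.Gamma_pos_of_pos (by linarith)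
  have h2 : 0 < Real.Gamma (1/2) := Real.Gamma_pos_of_pos (by norm_num)
  have h3 : 0 < Real.Gamma (α+1/2) := Real.Gamma_pos_of_pos (by linarith)
  have h4 : (0:ℝ) < (2:ℝ) ^ (2*α-1) := Real.rpow_pos_of_pos (by norm_num) _
  exact div_pos h1 (by positivity)

lemma hmeasIn (n : ℕ) : MeasurableSet (In n) := by unfold In; exact measurableSet_Ico

/-- generic lower bound for `omegaM` of a set -/
lemma omega_ge {α : ℝ} {s : Set ℝ} (hs : MeasurableSet s) {a b c : ℝ}
    (hab : Set.Ioc a b ⊆ s ∩ Set.Ioi 0)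
    (hc : ∀ z ∈ Set.Ioc a b, c ≤ z ^ (2*α+1)) (hc0 : 0 ≤ c) :
    ENNReal.ofReal c * volume (Set.Ioc a b) ≤ omegaM α s := by
  rw [omegaM, withDensity_apply _ hs, Measure.restrict_restrict hs]
  calc ENNReal.ofReal c * volume (Set.Ioc a b)
      = ∫⁻ _ in Set.Ioc a b, ENNReal.ofReal c ∂volume := by
        rw [setLIntegral_const, mul_comm]
    _ ≤ ∫⁻ z in Set.Ioc a b, ENNReal.ofReal (z ^ (2*α+1)) ∂volume := by
        refine setLIntegral_mono (by fun_prop) fun z hz => ?_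
        exact ENNReal.ofReal_le_ofReal (hc z hz)
    _ ≤ ∫⁻ z in s ∩ Set.Ioi 0, ENNReal.ofReal (z ^ (2*α+1)) ∂volume :=
        lintegral_mono_set hab

lemma wn_ge_one {α : ℝ} (hα : 1/2 ≤ α) {n : ℕ} (hn : 1 ≤ n) :
    ENNReal.ofReal ((1/2) * (n:ℝ) ^ (2*α+1)) ≤ wn α n := by
  have hn' : (1:ℝ) ≤ (n:ℝ) := by exact_mod_cast hn
  have h := omega_ge (α := α) (hmeasIn n) (a := (n:ℝ)) (b := (n:ℝ)+1/2)
    (c := (n:ℝ) ^ (2*α+1)) ?_ ?_ ?_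
  · rw [Real.volume_Ioc] at h
    calc ENNReal.ofReal ((1/2) * (n:ℝ) ^ (2*α+1))
        = ENNReal.ofReal ((n:ℝ) ^ (2*α+1)) * ENNReal.ofReal (1/2) := by
          rw [← ENNReal.ofReal_mul (by positivity)]; ring_nf
      _ ≤ wn α n := by
          convert h using 3; norm_num; rfl
  · intro z hz
    constructor
    · rw [In]; exact ⟨le_of_lt hz.1, by linarith [hz.2]⟩
    · exact lt_of_lt_of_le (by linarith) hz.1.le
  · intro z hz
    exact Real.rpow_le_rpow (by linarith) hz.1.le (by linarith)
  · positivity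

lemma wn_ge_zero {α : ℝ} (hα : 1/2 ≤ α) :
    ENNReal.ofReal ((1/4) * (1/2:ℝ) ^ (2*α+1)) ≤ wn α 0 := by
  have h := omega_ge (α := α) (hmeasIn 0) (a := (1/2:ℝ)) (b := (3/4:ℝ))
    (c := (1/2:ℝ) ^ (2*α+1)) ?_ ?_ ?_
  · rw [Real.volume_Ioc] at h
    calc ENNReal.ofReal ((1/4) * (1/2:ℝ) ^ (2*α+1))
        = ENNReal.ofReal ((1/2:ℝ) ^ (2*α+1)) * ENNReal.ofReal (3/4 - 1/2) := by
          rw [← ENNReal.ofReal_mul (by positivity)]; ring_nf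
      _ ≤ wn α 0 := h
  · intro z hz
    refine ⟨?_, by simp; linarith [hz.1]⟩
    rw [In]; constructor <;> simp <;> [linarith [hz.1]; linarith [hz.2]]
  · intro z hz
    exact Real.rpow_le_rpow (by norm_num) hz.1.le (by linarith)
  · positivity

/-- continuity/integrability of the kernel away from 0 -/
lemma Kker_intervalIntegrable {α x y : ℝ} (hα : 1/2 ≤ α) (hx : 0 < x) (hy : 0 < y)
    {a b : ℝ} (ha : 0 < a) (hab : a ≤ b) :
    IntervalIntegrable (fun z => Kker α x y z * z ^ (2*α+1)) volume a b := by
  apply ContinuousOn.intervalIntegrable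
  rw [Set.uIcc_of_le hab]
  have hnum : Continuous fun z : ℝ =>
      CGamma α * ((z^2 - (x-y)^2) * ((x+y)^2 - z^2)) ^ (α - 1/2) := by
    refine continuous_const.mul ?_
    exact (Real.continuous_rpow_const (by linarith)).comp (by continuity)
  have hden : Continuous fun z : ℝ => (x*y*z) ^ (2*α) := by
    exact (Real.continuous_rpow_const (by linarith)).comp (by continuity)
  have hzp : Continuous fun z : ℝ => z ^ (2*α+1) :=
    Real.continuous_rpow_const (by linarith)
  refine ContinuousOn.mul ?_ hzp.continuousOn
  refine ContinuousOn.div hnum.continuousOn hden.continuousOn fun z hz => ?_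
  have hz0 : 0 < z := lt_of_lt_of_le ha hz.1
  exact ne_of_gt (Real.rpow_pos_of_pos (by positivity) _)

/-- nonnegativity of the kernel on the relevant interval -/
lemma Kker_nonneg {α x y z : ℝ} (hα : 1/2 ≤ α) (hx : 0 ≤ x) (hy : 0 ≤ y) (hz0 : 0 ≤ z)
    (h1 : |x - y| ≤ z) (h2 : z ≤ x + y) :
    0 ≤ Kker α x y z * z ^ (2*α+1) := by
  have hb1 : (x-y)^2 ≤ z^2 := by
    have := abs_nonneg (x - y)
    nlinarith [sq_abs (x - y)]
  have hb2 : z^2 ≤ (x+y)^2 := by nlinarith [le_trans (abs_nonneg (x-y)) h1]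
  have hB : 0 ≤ (z^2 - (x-y)^2) * ((x+y)^2 - z^2) := by nlinarith
  refine mul_nonneg ?_ (Real.rpow_nonneg hz0 _)
  refine div_nonneg (mul_nonneg (CGamma_pos hα).le (Real.rpow_nonneg hB _)) ?_
  exact Real.rpow_nonneg (by positivity) _

/-- main pointwise lower bound for the kernel -/
lemma Kker_lower {α : ℝ} (hα : 1/2 ≤ α) {n : ℕ} (hn : 1 ≤ n) {x y z : ℝ}
    (hx1 : (n:ℝ) ≤ x) (hx2 : x ≤ (n:ℝ)+1) (hy : y = (n:ℝ)+1/2)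
    (hdz : (x-y)^2 ≤ 1/4) (hz1 : 3/4 ≤ z) (hz2 : z ≤ 1) :
    CGamma α * (3/4)^(2*α+1) / 5^(2*α) * (n:ℝ)^(-(2*α+1)) ≤ Kker α x y z * z^(2*α+1) := by
  have hn' : (1:ℝ) ≤ (n:ℝ) := by exact_mod_cast hn
  have hxp : 0 < x := lt_of_lt_of_le one_pos (le_trans hn' hx1)
  have hyp : 0 < y := by rw [hy]; linarith
  have hzp : 0 < z := by linarith
  have hC := CGamma_pos hα
  set B := (z^2 - (x-y)^2) * ((x+y)^2 - z^2) with hBdef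
  have h1 : (5:ℝ)/16 ≤ z^2 - (x-y)^2 := by nlinarith
  have h2 : 4*(n:ℝ)^2 ≤ (x+y)^2 - z^2 := by nlinarith
  have hB : (n:ℝ)^2 ≤ B := by nlinarith
  have hBp : (n:ℝ)^(2*α-1) ≤ B^(α-1/2) := by
    have h := Real.rpow_le_rpow (by positivity) hB (by linarith : (0:ℝ) ≤ α - 1/2)
    rwa [← Real.rpow_natCast (n:ℝ) 2, ← Real.rpow_mul (by positivity),
      show ((2:ℕ):ℝ) * (α - 1/2) = 2*α - 1 by push_cast; ring] at h
  have hzpow : (3/4:ℝ)^(2*α+1) ≤ z^(2*α+1) :=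
    Real.rpow_le_rpow (by norm_num) hz1 (by linarith)
  have hxyz : x*y*z ≤ 5*(n:ℝ)^2 := by nlinarith
  have hD : (x*y*z)^(2*α) ≤ 5^(2*α) * (n:ℝ)^(4*α) := by
    calc (x*y*z)^(2*α) ≤ (5*(n:ℝ)^2)^(2*α) :=
          Real.rpow_le_rpow (by positivity) hxyz (by linarith)
      _ = 5^(2*α) * ((n:ℝ)^2)^(2*α) := Real.mul_rpow (by norm_num) (by positivity)
      _ = 5^(2*α) * (n:ℝ)^(4*α) := by
          rw [← Real.rpow_natCast (n:ℝ) 2, ← Real.rpow_mul (by positivity),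
            show ((2:ℕ):ℝ) * (2*α) = 4*α by push_cast; ring]
  have hDpos : 0 < (x*y*z)^(2*α) := Real.rpow_pos_of_pos (by positivity) _
  rw [Kker, show CGamma α * B ^ (α - 1/2) / (x*y*z) ^ (2*α) * z ^ (2*α+1)
      = (CGamma α * B ^ (α - 1/2) * z ^ (2*α+1)) / (x*y*z) ^ (2*α) by ring]
  have hN : CGamma α * (n:ℝ)^(2*α-1) * (3/4:ℝ)^(2*α+1)
      ≤ CGamma α * B^(α-1/2) * z^(2*α+1) := by
    have h0 : (0:ℝ) ≤ (n:ℝ)^(2*α-1) := Real.rpow_nonneg (by positivity) _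
    have h0' : (0:ℝ) ≤ (3/4:ℝ)^(2*α+1) := Real.rpow_nonneg (by norm_num) _
    have hNB : 0 ≤ CGamma α * B^(α-1/2) :=
      mul_nonneg hC.le (le_trans h0 hBp)
    exact mul_le_mul (mul_le_mul le_rfl hBp h0 hC.le) hzpow h0' hNB
  have hfinal : CGamma α * (3/4)^(2*α+1) / 5^(2*α) * (n:ℝ)^(-(2*α+1))
      = (CGamma α * (n:ℝ)^(2*α-1) * (3/4:ℝ)^(2*α+1)) / (5^(2*α) * (n:ℝ)^(4*α)) := by
    have hsplit : (n:ℝ)^(2*α-1) = (n:ℝ)^(4*α) * (n:ℝ)^(-(2*α+1)) := by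
      rw [← Real.rpow_add (by positivity)]; ring_nf
    have h5 : (0:ℝ) < (5:ℝ)^(2*α) := Real.rpow_pos_of_pos (by norm_num) _
    have hn4 : (0:ℝ) < (n:ℝ)^(4*α) := Real.rpow_pos_of_pos (by positivity) _
    rw [hsplit]; field_simp
  rw [hfinal]
  have hNnn : 0 ≤ CGamma α * B^(α-1/2) * z^(2*α+1) :=
    mul_nonneg (mul_nonneg hC.le (Real.rpow_nonneg (le_trans (by positivity) hB) _))
      (Real.rpow_nonneg hzp.le _)
  exact div_le_div₀ hNnn hN hDpos hD

lemma IntervalIntegrable.indicator' {f : ℝ → ℝ} {a b : ℝ}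
    (h : IntervalIntegrable f volume a b) {s : Set ℝ} (hs : MeasurableSet s) :
    IntervalIntegrable (s.indicator f) volume a b := by
  rw [intervalIntegrable_iff] at h ⊢
  exact h.indicator hs

lemma tau_ge {α : ℝ} (hα : 1/2 ≤ α) {n : ℕ} (hn : 1 ≤ n) {x : ℝ}
    (hx1 : (n:ℝ) ≤ x) (hx2 : x < (n:ℝ) + 1) (hxy : x ≠ (n:ℝ) + 1/2) :
    CGamma α * (3/4) ^ (2*α+1) / 5 ^ (2*α) / 4 * (n:ℝ) ^ (-(2*α+1))
      ≤ tau α ((n:ℝ) + 1/2) ((Set.Icc (0:ℝ) 1).indicator 1) x := by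
  have hn' : (1:ℝ) ≤ (n:ℝ) := by exact_mod_cast hn
  set y : ℝ := (n:ℝ) + 1/2 with hydef
  have hyp : 0 < y := by rw [hydef]; linarith
  have hxp : 0 < x := by linarith
  rw [tau, if_neg hyp.ne', if_neg hxp.ne']
  set h : ℝ → ℝ := fun z => Kker α x y z * z ^ (2*α+1) with hhdef
  set G : ℝ → ℝ := (Set.Icc (0:ℝ) 1).indicator h with hGdef
  have hint : (fun z => (Kker α x y z * z ^ (2*α+1)) • ((Set.Icc (0:ℝ) 1).indicator 1 z)) = G := by
    funext z
    by_cases hz : z ∈ Set.Icc (0:ℝ) 1 <;>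
      simp [hGdef, hhdef, Set.indicator_of_mem, Set.indicator_of_notMem, hz]
  rw [hint]
  set d : ℝ := |x - y| with hddef
  have hd0 : 0 < d := abs_pos.mpr (sub_ne_zero.mpr hxy)
  have hd : d ≤ 1/2 := by
    rw [hddef, abs_le]; constructor <;> [linarith; linarith]
  have hS : (5:ℝ)/2 ≤ x + y := by rw [hydef]; linarith
  have hdS : d ≤ x + y := by linarith
  have hGint : IntervalIntegrable G volume d (x+y) :=
    (Kker_intervalIntegrable hα hxp hyp hd0 hdS).indicator' measurableSet_Icc
  have hsub1 : Set.uIcc d (3/4:ℝ) ⊆ Set.uIcc d (x+y) := by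
    rw [Set.uIcc_of_le hdS, Set.uIcc_of_le (by linarith)]
    exact Set.Icc_subset_Icc le_rfl (by linarith)
  have hsub2 : Set.uIcc (3/4:ℝ) (1:ℝ) ⊆ Set.uIcc d (x+y) := by
    rw [Set.uIcc_of_le hdS, Set.uIcc_of_le (by norm_num)]
    exact Set.Icc_subset_Icc (by linarith) (by linarith)
  have hsub3 : Set.uIcc (1:ℝ) (x+y) ⊆ Set.uIcc d (x+y) := by
    rw [Set.uIcc_of_le hdS, Set.uIcc_of_le (by linarith)]
    exact Set.Icc_subset_Icc (by linarith) le_rfl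
  have hsub4 : Set.uIcc (3/4:ℝ) (x+y) ⊆ Set.uIcc d (x+y) := by
    rw [Set.uIcc_of_le hdS, Set.uIcc_of_le (by linarith)]
    exact Set.Icc_subset_Icc (by linarith) le_rfl
  have i1 : IntervalIntegrable G volume d (3/4) := hGint.mono_set hsub1
  have i2 : IntervalIntegrable G volume (3/4) 1 := hGint.mono_set hsub2
  have i3 : IntervalIntegrable G volume 1 (x+y) := hGint.mono_set hsub3
  have i4 : IntervalIntegrable G volume (3/4) (x+y) := hGint.mono_set hsub4
  have hGnn : ∀ u : ℝ, d ≤ u → u ≤ x + y → 0 ≤ G u := by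
    intro u hu1 hu2
    rw [hGdef]
    by_cases hu : u ∈ Set.Icc (0:ℝ) 1
    · rw [Set.indicator_of_mem hu]
      exact Kker_nonneg hα hxp.le hyp.le (le_trans hd0.le hu1) hu1 hu2
    · rw [Set.indicator_of_notMem hu]
  have e1 : ∫ z in d..(x+y), G z
      = (∫ z in d..(3/4), G z) + ((∫ z in (3/4)..1, G z) + ∫ z in (1:ℝ)..(x+y), G z) := by
    rw [intervalIntegral.integral_add_adjacent_intervals i2 i3,
      intervalIntegral.integral_add_adjacent_intervals i1 i4]
  have nn1 : 0 ≤ ∫ z in d..(3/4), G z := by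
    apply intervalIntegral.integral_nonneg (by linarith)
    intro u hu; exact hGnn u hu.1 (by linarith [hu.2])
  have nn3 : 0 ≤ ∫ z in (1:ℝ)..(x+y), G z := by
    apply intervalIntegral.integral_nonneg (by linarith)
    intro u hu; exact hGnn u (by linarith [hu.1]) hu.2
  have hmid : CGamma α * (3/4) ^ (2*α+1) / 5 ^ (2*α) / 4 * (n:ℝ) ^ (-(2*α+1))
      ≤ ∫ z in (3/4:ℝ)..1, G z := by
    have hconst : ∀ u ∈ Set.Icc (3/4:ℝ) 1,
        CGamma α * (3/4) ^ (2*α+1) / 5 ^ (2*α) * (n:ℝ) ^ (-(2*α+1)) ≤ G u := by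
      intro u hu
      have hmem : u ∈ Set.Icc (0:ℝ) 1 := ⟨by linarith [hu.1], hu.2⟩
      rw [hGdef, Set.indicator_of_mem hmem]
      refine Kker_lower hα hn hx1 (by linarith) hydef ?_ hu.1 hu.2
      have := abs_le.mp hd
      nlinarith [sq_abs (x - y)]
    have := intervalIntegral.integral_mono_on (by norm_num : (3/4:ℝ) ≤ 1)
      (intervalIntegrable_const) i2 hconst
    rw [intervalIntegral.integral_const, smul_eq_mul] at this
    calc CGamma α * (3/4) ^ (2*α+1) / 5 ^ (2*α) / 4 * (n:ℝ) ^ (-(2*α+1))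
        = (1 - 3/4) * (CGamma α * (3/4) ^ (2*α+1) / 5 ^ (2*α) * (n:ℝ) ^ (-(2*α+1))) := by
          ring
      _ ≤ ∫ z in (3/4:ℝ)..1, G z := this
  rw [e1]; linarith

/-- The discrete `(p,∞)`-amalgam norm is dominated by the continuous one. -/
theorem discrete_le_continuous_amalgam (α : ℝ) (hα : 1/2 ≤ α) (p : ℝ) (hp : 1 ≤ p) :
    ∃ C : ℝ, 0 < C ∧ ∀ f : ℝ → ℂ, Measurable f →
      amalgamNorm α (ENNReal.ofReal p) ⊤ f ≤ ENNReal.ofReal C * contNorm α p f := by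
  have hp0 : 0 < p := by linarith
  have hip : 0 ≤ 1/p := by positivity
  set c1 : ℝ := CGamma α * (3/4) ^ (2*α+1) / 5 ^ (2*α) / 4 with hc1def
  have hc1 : 0 < c1 := by
    have := CGamma_pos hα
    have h34 : (0:ℝ) < (3/4:ℝ)^(2*α+1) := Real.rpow_pos_of_pos (by norm_num) _
    have h5 : (0:ℝ) < (5:ℝ)^(2*α) := Real.rpow_pos_of_pos (by norm_num) _
    positivity
  set cw : ℝ := (1/4) * (1/2:ℝ) ^ (2*α+1) with hcwdef
  have hcw : 0 < cw := by
    have : (0:ℝ) < (1/2:ℝ)^(2*α+1) := Real.rpow_pos_of_pos (by norm_num) _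
    positivity
  set C : ℝ := max ((2/c1) ^ (1/p)) (cw⁻¹ ^ (1/p)) with hCdef
  have hCpos : 0 < C := lt_max_of_lt_left (Real.rpow_pos_of_pos (by positivity) _)
  refine ⟨C, hCpos, fun f hf => ?_⟩
  have hPt : (ENNReal.ofReal p).toReal = p := ENNReal.toReal_ofReal hp0.le
  rw [amalgamNorm]
  simp only [ENNReal.ofReal_ne_top, if_false, if_true, hPt, reduceIte]
  refine iSup_le fun n => ?_
  set χ : ℝ → ℝ := (Set.Icc (0:ℝ) 1).indicator 1 with hχdef
  set J : ℝ≥0∞ := ∫⁻ x in In n, (‖f x‖₊ : ℝ≥0∞) ^ p ∂(omegaM α) with hJdef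
  set T : ℝ → ℝ≥0∞ := fun y =>
    ∫⁻ x, (‖f x‖₊ : ℝ≥0∞) ^ p * ENNReal.ofReal (tau α y χ x) ∂(omegaM α) with hTdef
  have hTle : ∀ y : ℝ, 0 ≤ y → (T y) ^ (1/p) ≤ contNorm α p f := by
    intro y hy
    rw [contNorm]
    exact le_biSup (f := fun y => (∫⁻ x, (‖f x‖₊ : ℝ≥0∞) ^ p *
      ENNReal.ofReal (tau α y ((Set.Icc (0:ℝ) 1).indicator 1) x) ∂(omegaM α)) ^ (1/p))
      (Set.mem_Ici.mpr hy)
  -- key per-n inequality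
  have hmain : ∃ K : ℝ, 0 < K ∧ K ^ (1/p) ≤ C ∧ ∃ y : ℝ, 0 ≤ y ∧
      (wn α n)⁻¹ * J ≤ ENNReal.ofReal K * T y := by
    rcases Nat.eq_zero_or_pos n with hn0 | hn1
    · -- n = 0 : take y = 0
      subst hn0
      refine ⟨cw⁻¹, by positivity, le_max_of_le_right le_rfl, 0, le_rfl, ?_⟩
      have hJT : J ≤ T 0 := by
        have hac : (omegaM α).restrict (In 0) ≪ volume.restrict (Set.Ioi (0:ℝ)) := by
          rw [omegaM]
          exact (Measure.absolutelyContinuous_of_le (Measure.restrict_le_self)).trans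
            (withDensity_absolutelyContinuous _ _)
        have hae0 : ∀ᵐ x ∂(omegaM α).restrict (In 0), x ∈ Set.Ioi (0:ℝ) :=
          (ae_restrict_mem measurableSet_Ioi).filter_mono hac.ae_le
        have hae2 : ∀ᵐ x ∂(omegaM α).restrict (In 0), x ∈ In 0 :=
          ae_restrict_mem (hmeasIn 0)
        have hcongr : J = ∫⁻ x in In 0,
            (‖f x‖₊ : ℝ≥0∞) ^ p * ENNReal.ofReal (tau α 0 χ x) ∂(omegaM α) := by
          refine lintegral_congr_ae ?_
          filter_upwards [hae0, hae2] with x hx0 hxI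
          have hxmem : x ∈ Set.Icc (0:ℝ) 1 := by
            rw [In] at hxI
            exact ⟨le_of_lt hx0, by simpa using hxI.2.le⟩
          rw [tau, if_pos rfl, hχdef, Set.indicator_of_mem hxmem, Pi.one_apply,
            ENNReal.ofReal_one, mul_one]
        rw [hcongr]
        exact lintegral_mono' Measure.restrict_le_self le_rfl
      calc (wn α 0)⁻¹ * J ≤ ENNReal.ofReal cw⁻¹ * T 0 := by
            refine mul_le_mul' ?_ hJT
            rw [ENNReal.ofReal_inv_of_pos hcw]
            exact ENNReal.inv_le_inv' (wn_ge_zero hα)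
        _ = ENNReal.ofReal cw⁻¹ * T 0 := rfl
    · -- n ≥ 1 : take y = n + 1/2
      have hn' : (1:ℝ) ≤ (n:ℝ) := by exact_mod_cast hn1
      refine ⟨2/c1, by positivity, le_max_of_le_left le_rfl, (n:ℝ) + 1/2, by linarith, ?_⟩
      set cst : ℝ := c1 * (n:ℝ) ^ (-(2*α+1)) with hcstdef
      have hnr : (0:ℝ) < (n:ℝ) ^ (2*α+1) := Real.rpow_pos_of_pos (by linarith) _
      have hcst : 0 < cst := by
        have : (0:ℝ) < (n:ℝ) ^ (-(2*α+1)) := Real.rpow_pos_of_pos (by linarith) _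
        positivity
      have hkey : ENNReal.ofReal cst * J ≤ T ((n:ℝ) + 1/2) := by
        have hsing : omegaM α {(n:ℝ) + 1/2} = 0 := by
          rw [omegaM, withDensity_apply _ (measurableSet_singleton _)]
          have h0 : (volume.restrict (Set.Ioi (0:ℝ))) {(n:ℝ) + 1/2} = 0 := by
            rw [Measure.restrict_apply (measurableSet_singleton _)]
            exact measure_mono_null Set.inter_subset_left (Real.volume_singleton)
          exact setLIntegral_measure_zero _ _ h0
        have hae1 : ∀ᵐ x ∂(omegaM α).restrict (In n), x ≠ (n:ℝ) + 1/2 := by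
          refine ae_restrict_of_ae ?_
          rw [ae_iff]
          convert hsing using 2
          ext t; simp [not_not]
        have hae2 : ∀ᵐ x ∂(omegaM α).restrict (In n), x ∈ In n := ae_restrict_mem (hmeasIn n)
        calc ENNReal.ofReal cst * J
            = ∫⁻ x in In n, ENNReal.ofReal cst * (‖f x‖₊ : ℝ≥0∞) ^ p ∂(omegaM α) := by
              rw [hJdef, lintegral_const_mul' _ _ ENNReal.ofReal_ne_top]
          _ ≤ ∫⁻ x in In n,
              (‖f x‖₊ : ℝ≥0∞) ^ p * ENNReal.ofReal (tau α ((n:ℝ)+1/2) χ x) ∂(omegaM α) := by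
              refine lintegral_mono_ae ?_
              filter_upwards [hae1, hae2] with x hxne hxI
              rw [In] at hxI
              rw [mul_comm]
              refine mul_le_mul' le_rfl ?_
              refine ENNReal.ofReal_le_ofReal ?_
              exact tau_ge hα hn1 hxI.1 (by simpa using hxI.2) hxne
          _ ≤ T ((n:ℝ)+1/2) := lintegral_mono' Measure.restrict_le_self le_rfl
      have hwn : (wn α n)⁻¹ ≤ ENNReal.ofReal ((1/2 * (n:ℝ) ^ (2*α+1))⁻¹) := by
        rw [ENNReal.ofReal_inv_of_pos (by positivity)]
        exact ENNReal.inv_le_inv' (wn_ge_one hα hn1)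
      have hsplit : ((1/2:ℝ) * (n:ℝ) ^ (2*α+1))⁻¹ = (2/c1) * cst := by
        rw [hcstdef, Real.rpow_neg (by linarith)]
        field_simp
      calc (wn α n)⁻¹ * J ≤ ENNReal.ofReal ((1/2 * (n:ℝ) ^ (2*α+1))⁻¹) * J :=
            mul_le_mul' hwn le_rfl
        _ = ENNReal.ofReal (2/c1) * (ENNReal.ofReal cst * J) := by
            rw [hsplit, ENNReal.ofReal_mul (by positivity), mul_assoc]
        _ ≤ ENNReal.ofReal (2/c1) * T ((n:ℝ)+1/2) := mul_le_mul' le_rfl hkey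
  obtain ⟨K, hK, hKC, y, hy, hle⟩ := hmain
  calc ((wn α n)⁻¹ * ∫⁻ x in In n, (‖f x‖₊ : ℝ≥0∞) ^ p ∂(omegaM α)) ^ (1/p)
      ≤ (ENNReal.ofReal K * T y) ^ (1/p) := ENNReal.rpow_le_rpow hle hip
    _ = (ENNReal.ofReal K) ^ (1/p) * (T y) ^ (1/p) := ENNReal.mul_rpow_of_nonneg _ _ hip
    _ = ENNReal.ofReal (K ^ (1/p)) * (T y) ^ (1/p) := by
        rw [ENNReal.ofReal_rpow_of_pos hK]
    _ ≤ ENNReal.ofReal C * contNorm α p f :=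
        mul_le_mul' (ENNReal.ofReal_le_ofReal hKC) (hTle y hy)
end
end

section
/- Uniform boundedness of translation on (L^∞, ℓ¹): there is a constant C > 0 (depending only on α) such that for every y ∈ ℝ₊ and every measurable f : ℝ₊ → ℂ with ‖f‖_{∞,1} < ∞ one has ‖τ_y f‖_{∞,1} ≤ C·‖f‖_{∞,1}. -/
open MeasureTheory Real Set ENNReal ComplexOrder

noncomputable section

namespace BK

variable {α : ℝ}

lemma CGamma_pos (hα : 1/2 ≤ α) : 0 < CGamma α := by
  have h0 : (0:ℝ) < 1/2 := by norm_num
  apply div_pos (Real.Gamma_pos_of_pos (by linarith))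
  exact mul_pos (mul_pos (Real.Gamma_pos_of_pos h0) (Real.Gamma_pos_of_pos (by linarith)))
    (Real.rpow_pos_of_pos (by norm_num) _)

lemma amalgam_eq {E : Type*} [NormedAddCommGroup E] (f : ℝ → E) :
    amalgamNorm α ⊤ 1 f = ∑' n, wn α n * ⨆ x ∈ In n, (‖f x‖₊ : ℝ≥0∞) := by
  simp [amalgamNorm]

lemma In_measurable (n : ℕ) : MeasurableSet (In n) := measurableSet_Ico

lemma wn_eq (n : ℕ) : wn α n = ∫⁻ z in In n ∩ Set.Ioi 0, ENNReal.ofReal (z ^ (2*α+1)) := by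
  rw [wn, omegaM, withDensity_apply _ (In_measurable n), Measure.restrict_restrict (In_measurable n)]

lemma wn_le (hα : 1/2 ≤ α) (n : ℕ) : wn α n ≤ ENNReal.ofReal (((n:ℝ)+1) ^ (2*α+1)) := by
  rw [wn_eq]
  calc ∫⁻ z in In n ∩ Set.Ioi 0, ENNReal.ofReal (z ^ (2*α+1))
      ≤ ∫⁻ _ in In n ∩ Set.Ioi 0, ENNReal.ofReal (((n:ℝ)+1) ^ (2*α+1)) := by
        apply setLIntegral_mono measurable_const
        intro z hz
        apply ENNReal.ofReal_le_ofReal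
        apply Real.rpow_le_rpow (le_of_lt hz.2) (le_of_lt hz.1.2) (by linarith)
    _ = ENNReal.ofReal (((n:ℝ)+1) ^ (2*α+1)) * volume (In n ∩ Set.Ioi 0) := setLIntegral_const _ _
    _ ≤ ENNReal.ofReal (((n:ℝ)+1) ^ (2*α+1)) * volume (In n) := by
        gcongr; exact Set.inter_subset_left
    _ = ENNReal.ofReal (((n:ℝ)+1) ^ (2*α+1)) := by
        rw [In, Real.volume_Ico]; simp

lemma wn_ge (hα : 1/2 ≤ α) (n : ℕ) :
    ENNReal.ofReal (((n:ℝ)+1) ^ (2*α+1) / 2 ^ (2*α+2)) ≤ wn α n := by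
  rw [wn_eq]
  have hsub : Set.Ico ((n:ℝ)+1/2) ((n:ℝ)+1) ⊆ In n ∩ Set.Ioi 0 := by
    intro z hz
    constructor
    · exact ⟨le_trans (by linarith [hz.1]) hz.1, hz.2⟩
    · have : (0:ℝ) ≤ (n:ℝ) := Nat.cast_nonneg n
      simp only [Set.mem_Ioi]; linarith [hz.1]
  calc ENNReal.ofReal (((n:ℝ)+1) ^ (2*α+1) / 2 ^ (2*α+2))
      = ENNReal.ofReal ((((n:ℝ)+1)/2) ^ (2*α+1)) * volume (Set.Ico ((n:ℝ)+1/2) ((n:ℝ)+1)) := by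
        rw [Real.volume_Ico]
        have h2 : ((n:ℝ)+1 - ((n:ℝ)+1/2)) = 1/2 := by ring
        rw [h2, ← ENNReal.ofReal_mul (by positivity)]
        congr 1
        rw [Real.div_rpow (by positivity) (by norm_num)]
        rw [show (2:ℝ)*α+2 = (2*α+1)+1 by ring, Real.rpow_add (by norm_num : (0:ℝ)<2) (2*α+1) 1, Real.rpow_one]
        field_simp
    _ = ∫⁻ _ in Set.Ico ((n:ℝ)+1/2) ((n:ℝ)+1), ENNReal.ofReal ((((n:ℝ)+1)/2) ^ (2*α+1)) := (setLIntegral_const _ _).symm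
    _ ≤ ∫⁻ z in Set.Ico ((n:ℝ)+1/2) ((n:ℝ)+1), ENNReal.ofReal (z ^ (2*α+1)) := by
        apply setLIntegral_mono (by measurability)
        intro z hz
        apply ENNReal.ofReal_le_ofReal
        apply Real.rpow_le_rpow (by positivity) (by linarith [hz.1]) (by linarith)
    _ ≤ ∫⁻ z in In n ∩ Set.Ioi 0, ENNReal.ofReal (z ^ (2*α+1)) := lintegral_mono_set hsub

lemma sq_rpow {w : ℝ} (hw : 0 ≤ w) (e : ℝ) : (w^2) ^ e = w ^ (2*e) := by
  rw [← Real.rpow_natCast w 2, ← Real.rpow_mul hw]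
  norm_num

lemma bound_mono {C b1 b2 z1 z2 D1 D2 e : ℝ} (hC : 0 ≤ C) (he : 0 ≤ e)
    (hb0 : 0 ≤ b1) (hb : b1 ≤ b2) (hz0 : 0 ≤ z1) (hz : z1 ≤ z2) (hD2 : 0 < D2) (hD : D2 ≤ D1) :
    C * b1 ^ e * z1 / D1 ≤ C * b2 ^ e * z2 / D2 := by
  have hnum : 0 ≤ C * b1 ^ e * z1 :=
    mul_nonneg (mul_nonneg hC (Real.rpow_nonneg hb0 e)) hz0
  have h1 : C * b1 ^ e * z1 ≤ C * b2 ^ e * z2 :=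
    mul_le_mul (mul_le_mul_of_nonneg_left (Real.rpow_le_rpow hb0 hb he) hC) hz hz0
      (mul_nonneg hC (Real.rpow_nonneg (hb0.trans hb) e))
  calc C * b1 ^ e * z1 / D1 ≤ C * b1 ^ e * z1 / D2 :=
        div_le_div_of_nonneg_left hnum hD2 hD
    _ ≤ C * b2 ^ e * z2 / D2 := by gcongr

lemma g_eq {x y z : ℝ} (hx : 0 < x) (hy : 0 < y) (hz : 0 < z) :
    Kker α x y z * z ^ (2*α+1)
      = CGamma α * ((z^2-(x-y)^2)*((x+y)^2-z^2)) ^ (α-1/2) * z / (x*y) ^ (2*α) := by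
  rw [Kker, show x*y*z = (x*y)*z by ring, Real.mul_rpow (by positivity) hz.le,
    Real.rpow_add hz (2*α) 1, Real.rpow_one]
  have h1 : (x*y)^(2*α) ≠ 0 := ne_of_gt (Real.rpow_pos_of_pos (by positivity) _)
  have h2 : z^(2*α) ≠ 0 := ne_of_gt (Real.rpow_pos_of_pos hz _)
  field_simp

lemma g_le (hα : 1/2 ≤ α) {x y z R : ℝ} (hx : 0 < x) (hy : 0 < y)
    (hz1 : |x-y| ≤ z) (hz2 : z ≤ x+y) (hz0 : 0 < z)
    (hR : (z^2-(x-y)^2)*((x+y)^2-z^2) ≤ R) :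
    Kker α x y z * z ^ (2*α+1) ≤ CGamma α * R ^ (α-1/2) * z / (x*y) ^ (2*α) := by
  rw [g_eq hx hy hz0]
  have hza : (x-y)^2 ≤ z^2 := by
    rw [← sq_abs (x-y)]; exact pow_le_pow_left₀ (abs_nonneg _) hz1 2
  have hzb : z^2 ≤ (x+y)^2 := pow_le_pow_left₀ hz0.le hz2 2
  have hP : 0 ≤ (z^2-(x-y)^2)*((x+y)^2-z^2) :=
    mul_nonneg (by linarith) (by linarith)
  exact bound_mono (CGamma_pos hα).le (by linarith) hP hR hz0.le le_rfl
    (Real.rpow_pos_of_pos (by positivity) _) le_rfl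

def C16 (α : ℝ) : ℝ := CGamma α * 16 ^ (α-1/2)

lemma C16_pos (hα : 1/2 ≤ α) : 0 < C16 α :=
  mul_pos (CGamma_pos hα) (Real.rpow_pos_of_pos (by norm_num) _)

lemma gB1 (hα : 1/2 ≤ α) {x y z : ℝ} (hx : 0 < x) (hy : 0 < y)
    (hz : z ∈ Set.Ioc (|x-y|) (x+y)) :
    Kker α x y z * z ^ (2*α+1) ≤ C16 α * (z/(x*y)) := by
  have hz0 : 0 < z := lt_of_le_of_lt (abs_nonneg _) hz.1
  have hxy : (0:ℝ) < x*y := mul_pos hx hy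
  have hza : (x-y)^2 ≤ z^2 := by
    rw [← sq_abs (x-y)]; exact pow_le_pow_left₀ (abs_nonneg _) hz.1.le 2
  have hzb : z^2 ≤ (x+y)^2 := pow_le_pow_left₀ hz0.le hz.2 2
  have h1 : z^2-(x-y)^2 ≤ 4*(x*y) := by nlinarith
  have h2 : (x+y)^2-z^2 ≤ 4*(x*y) := by nlinarith
  have h4 : 0 ≤ (x+y)^2-z^2 := by linarith
  have hR : (z^2-(x-y)^2)*((x+y)^2-z^2) ≤ 16*(x*y)^2 := by
    nlinarith [mul_le_mul h1 h2 h4 (by positivity : (0:ℝ) ≤ 4*(x*y))]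
  refine (g_le hα hx hy hz.1.le hz.2 hz0 hR).trans (le_of_eq ?_)
  rw [Real.mul_rpow (by norm_num) (by positivity), sq_rpow hxy.le, C16]
  have he : (x*y) ^ (2*(α-1/2)) = (x*y)^(2*α) / (x*y) := by
    rw [show 2*(α-1/2) = 2*α + (-1) by ring, Real.rpow_add hxy, Real.rpow_neg_one]
    ring
  rw [he]
  have hD : (x*y)^(2*α) ≠ 0 := ne_of_gt (Real.rpow_pos_of_pos hxy _)
  field_simp

lemma gB2 (hα : 1/2 ≤ α) {x y z : ℝ} (hx : 0 < x) (hy : 0 < y)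
    (hz : z ∈ Set.Ioc (|x-y|) (x+y)) :
    Kker α x y z * z ^ (2*α+1) ≤ CGamma α * (z*(x+y)) ^ (2*α-1) * z / (x*y) ^ (2*α) := by
  have hz0 : 0 < z := lt_of_le_of_lt (abs_nonneg _) hz.1
  have hza : (x-y)^2 ≤ z^2 := by
    rw [← sq_abs (x-y)]; exact pow_le_pow_left₀ (abs_nonneg _) hz.1.le 2
  have hzb : z^2 ≤ (x+y)^2 := pow_le_pow_left₀ hz0.le hz.2 2
  have h1 : z^2-(x-y)^2 ≤ z^2 := by nlinarith [sq_nonneg (x-y)]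
  have h2 : (x+y)^2-z^2 ≤ (x+y)^2 := by nlinarith [sq_nonneg z]
  have h4 : 0 ≤ (x+y)^2-z^2 := by linarith
  have hR : (z^2-(x-y)^2)*((x+y)^2-z^2) ≤ (z*(x+y))^2 := by
    nlinarith [mul_le_mul h1 h2 h4 (sq_nonneg z)]
  refine (g_le hα hx hy hz.1.le hz.2 hz0 hR).trans (le_of_eq ?_)
  rw [sq_rpow (by positivity), show 2*(α-1/2) = 2*α-1 by ring]

lemma gB3 (hα : 1/2 ≤ α) {x y z : ℝ} (hx : 0 < x) (hy : 0 < y)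
    (hz : z ∈ Set.Ioc (|x-y|) (x+y)) :
    Kker α x y z * z ^ (2*α+1) ≤ CGamma α * (16*y^2*(z*(x+y))) ^ (α-1/2) * z / (x*y) ^ (2*α) := by
  have hz0 : 0 < z := lt_of_le_of_lt (abs_nonneg _) hz.1
  have hza : (x-y)^2 ≤ z^2 := by
    rw [← sq_abs (x-y)]; exact pow_le_pow_left₀ (abs_nonneg _) hz.1.le 2
  have hzb : z^2 ≤ (x+y)^2 := pow_le_pow_left₀ hz0.le hz.2 2
  have f1 : z - |x-y| ≤ 2*y := by linarith [hz.2, le_abs_self (x-y)]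
  have f2 : z + |x-y| ≤ 2*z := by linarith [hz.1]
  have f1' : x+y-z ≤ 2*y := by linarith [hz.1, le_abs_self (x-y)]
  have f2' : x+y+z ≤ 2*(x+y) := by linarith [hz.2]
  have h1 : z^2-(x-y)^2 ≤ 2*y*(2*z) := by
    nlinarith [mul_le_mul f1 f2 (by linarith [hz.1, abs_nonneg (x-y)] : (0:ℝ) ≤ z + |x-y|)
      (by linarith : (0:ℝ) ≤ 2*y), sq_abs (x-y)]
  have h2 : (x+y)^2-z^2 ≤ 2*y*(2*(x+y)) := by
    nlinarith [mul_le_mul f1' f2' (by linarith : (0:ℝ) ≤ x+y+z) (by linarith : (0:ℝ) ≤ 2*y)]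
  have h4 : 0 ≤ (x+y)^2-z^2 := by linarith
  have hR : (z^2-(x-y)^2)*((x+y)^2-z^2) ≤ 16*y^2*(z*(x+y)) := by
    nlinarith [mul_le_mul h1 h2 h4 (by positivity : (0:ℝ) ≤ 2*y*(2*z))]
  exact g_le hα hx hy hz.1.le hz.2 hz0 hR

def E2 (α : ℝ) (n m : ℕ) (y : ℝ) : ℝ :=
  CGamma α * (2*((m:ℝ)+1)*((n:ℝ)+y)) ^ (2*α-1) * ((m:ℝ)+1) / (((n:ℝ)*y) ^ (2*α))

def E1 (α : ℝ) (n m : ℕ) (y : ℝ) : ℝ :=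
  CGamma α * (16*y^2*(((m:ℝ)+1)*(2*((n:ℝ)+y)))) ^ (α-1/2) * ((m:ℝ)+1) / (((n:ℝ)*y) ^ (2*α))

lemma g_le_E2 (hα : 1/2 ≤ α) {n m : ℕ} (hn : 1 ≤ n) {x y z : ℝ} (hxI : x ∈ In n) (hy : 0 < y)
    (hzI : z ∈ In m) (hz : z ∈ Set.Ioc (|x-y|) (x+y)) :
    Kker α x y z * z ^ (2*α+1) ≤ E2 α n m y := by
  have hn1 : (1:ℝ) ≤ (n:ℝ) := by exact_mod_cast hn
  have hx : 0 < x := lt_of_lt_of_le (by linarith) hxI.1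
  have hz0 : 0 < z := lt_of_le_of_lt (abs_nonneg _) hz.1
  refine (gB2 hα hx hy hz).trans ?_
  rw [E2]
  have hb' : x+y ≤ 2*((n:ℝ)+y) := by
    have := hxI.2; simp only [In, Set.mem_Ico] at hxI; linarith [hxI.2]
  have hbb : z*(x+y) ≤ 2*((m:ℝ)+1)*((n:ℝ)+y) := by
    have h := mul_le_mul hzI.2.le hb' (by linarith) (by linarith [hzI.2, hz0])
    nlinarith [h]
  have hny : (0:ℝ) < (n:ℝ)*y := mul_pos (by linarith) hy
  exact bound_mono (CGamma_pos hα).le (by linarith) (by positivity) hbb hz0.le hzI.2.le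
    (Real.rpow_pos_of_pos hny _)
    (Real.rpow_le_rpow hny.le (mul_le_mul_of_nonneg_right hxI.1 hy.le) (by linarith))

lemma g_le_E1 (hα : 1/2 ≤ α) {n m : ℕ} (hn : 1 ≤ n) {x y z : ℝ} (hxI : x ∈ In n) (hy : 0 < y)
    (hzI : z ∈ In m) (hz : z ∈ Set.Ioc (|x-y|) (x+y)) :
    Kker α x y z * z ^ (2*α+1) ≤ E1 α n m y := by
  have hn1 : (1:ℝ) ≤ (n:ℝ) := by exact_mod_cast hn
  have hx : 0 < x := lt_of_lt_of_le (by linarith) hxI.1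
  have hz0 : 0 < z := lt_of_le_of_lt (abs_nonneg _) hz.1
  refine (gB3 hα hx hy hz).trans ?_
  rw [E1]
  have hb' : x+y ≤ 2*((n:ℝ)+y) := by
    have := hxI.2; simp only [In, Set.mem_Ico] at hxI; linarith [hxI.2]
  have hbb : z*(x+y) ≤ ((m:ℝ)+1)*(2*((n:ℝ)+y)) := by
    have h := mul_le_mul hzI.2.le hb' (by linarith) (by linarith [hzI.2, hz0])
    nlinarith [h]
  have hbb2 : 16*y^2*(z*(x+y)) ≤ 16*y^2*(((m:ℝ)+1)*(2*((n:ℝ)+y))) := by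
    apply mul_le_mul_of_nonneg_left hbb (by positivity)
  have hny : (0:ℝ) < (n:ℝ)*y := mul_pos (by linarith) hy
  exact bound_mono (CGamma_pos hα).le (by linarith) (by positivity) hbb2 hz0.le hzI.2.le
    (Real.rpow_pos_of_pos hny _)
    (Real.rpow_le_rpow hny.le (mul_le_mul_of_nonneg_right hxI.1 hy.le) (by linarith))
def C0 (α : ℝ) : ℝ := 2 * C16 α

lemma C0_pos (hα : 1/2 ≤ α) : 0 < C0 α := by
  have := C16_pos (α := α) hα; rw [C0]; linarith

def Cond (n m : ℕ) (y : ℝ) : Prop :=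
  (m:ℝ) < (n:ℝ)+1+y ∧ (n:ℝ) < (m:ℝ)+1+y ∧ y < (n:ℝ)+(m:ℝ)+2

open Classical in
def cB (α : ℝ) (n m : ℕ) (y : ℝ) : ℝ≥0∞ :=
  if Cond n m y then
    (if n = 0 then ENNReal.ofReal (C0 α)
     else min (ENNReal.ofReal (C0 α))
       (min (ENNReal.ofReal (E1 α n m y)) (ENNReal.ofReal (E2 α n m y))))
  else 0

lemma meas_g (hα : 1/2 ≤ α) (x y : ℝ) :
    Measurable fun z : ℝ => ENNReal.ofReal (Kker α x y z * z ^ (2*α+1)) := by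
  apply Measurable.ennreal_ofReal
  apply Measurable.mul
  · unfold Kker
    apply Measurable.div
    · apply Measurable.const_mul
      exact (Real.continuous_rpow_const (by linarith)).measurable.comp (by fun_prop)
    · exact (Real.continuous_rpow_const (by linarith)).measurable.comp (by fun_prop)
  · exact (Real.continuous_rpow_const (by linarith)).measurable

lemma lint_z {a b c : ℝ} (ha : 0 ≤ a) (hab : a ≤ b) (hc : 0 ≤ c) :
    ∫⁻ z in Set.Ioc a b, ENNReal.ofReal (c * z) = ENNReal.ofReal (c * (b^2 - a^2) / 2) := by
  rw [← ofReal_integral_eq_lintegral_ofReal]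
  · congr 1
    rw [← intervalIntegral.integral_of_le hab, intervalIntegral.integral_const_mul,
      integral_id]
    ring
  · exact (continuous_const.mul continuous_id).integrableOn_Ioc
  · filter_upwards [ae_restrict_mem measurableSet_Ioc] with z hz
    exact mul_nonneg hc (le_of_lt (lt_of_le_of_lt ha hz.1))

lemma mass_le (hα : 1/2 ≤ α) {n m : ℕ} {x y : ℝ} (hxI : x ∈ In n) (hx : 0 < x) (hy : 0 < y) :
    ∫⁻ z in In m ∩ Set.Ioc (|x-y|) (x+y), ENNReal.ofReal (Kker α x y z * z ^ (2*α+1))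
      ≤ cB α n m y := by
  have hxI' : (n:ℝ) ≤ x ∧ x < (n:ℝ)+1 := hxI
  by_cases hc : Cond n m y
  swap
  · have hS : In m ∩ Set.Ioc (|x-y|) (x+y) = ∅ := by
      rw [Set.eq_empty_iff_forall_notMem]
      rintro z ⟨hzI, hzJ⟩
      have hzI' : (m:ℝ) ≤ z ∧ z < (m:ℝ)+1 := hzI
      exact hc ⟨by linarith [hzJ.2, hzI'.1, hxI'.2],
        by linarith [le_abs_self (x-y), hzJ.1, hzI'.2, hxI'.1],
        by linarith [neg_abs_le (x-y), hzJ.1, hzI'.2, hxI'.2]⟩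
    rw [cB, if_neg hc, hS]
    simp
  · rw [cB, if_pos hc]
    have habs : |x-y| ≤ x+y := abs_le.mpr ⟨by linarith, by linarith⟩
    have hxy : (0:ℝ) < x*y := mul_pos hx hy
    have hC0 : ∫⁻ z in In m ∩ Set.Ioc (|x-y|) (x+y),
        ENNReal.ofReal (Kker α x y z * z ^ (2*α+1)) ≤ ENNReal.ofReal (C0 α) := by
      calc ∫⁻ z in In m ∩ Set.Ioc (|x-y|) (x+y), ENNReal.ofReal (Kker α x y z * z ^ (2*α+1))
          ≤ ∫⁻ z in Set.Ioc (|x-y|) (x+y), ENNReal.ofReal (Kker α x y z * z ^ (2*α+1)) :=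
            lintegral_mono_set Set.inter_subset_right
        _ ≤ ∫⁻ z in Set.Ioc (|x-y|) (x+y), ENNReal.ofReal ((C16 α / (x*y)) * z) := by
            apply setLIntegral_mono
            · exact (measurable_const.mul measurable_id).ennreal_ofReal
            · intro z hz
              apply ENNReal.ofReal_le_ofReal
              refine (gB1 hα hx hy hz).trans (le_of_eq (by ring))
        _ = ENNReal.ofReal ((C16 α / (x*y)) * ((x+y)^2 - |x-y|^2) / 2) :=
            lint_z (abs_nonneg _) habs (div_nonneg (C16_pos hα).le hxy.le)
        _ = ENNReal.ofReal (C0 α) := by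
            congr 1
            rw [sq_abs, C0]
            field_simp
            ring
    rcases Nat.eq_zero_or_pos n with hn0 | hn1
    · rw [if_pos hn0]; exact hC0
    · rw [if_neg (Nat.pos_iff_ne_zero.mp hn1)]
      refine le_min hC0 (le_min ?_ ?_)
      · calc ∫⁻ z in In m ∩ Set.Ioc (|x-y|) (x+y), ENNReal.ofReal (Kker α x y z * z ^ (2*α+1))
            ≤ ∫⁻ _ in In m ∩ Set.Ioc (|x-y|) (x+y), ENNReal.ofReal (E1 α n m y) := by
              apply setLIntegral_mono measurable_const
              intro z hz
              exact ENNReal.ofReal_le_ofReal (g_le_E1 hα hn1 hxI hy hz.1 hz.2)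
          _ = ENNReal.ofReal (E1 α n m y) * volume (In m ∩ Set.Ioc (|x-y|) (x+y)) :=
              setLIntegral_const _ _
          _ ≤ ENNReal.ofReal (E1 α n m y) * volume (In m) := by
              gcongr; exact Set.inter_subset_left
          _ ≤ ENNReal.ofReal (E1 α n m y) := by
              rw [In, Real.volume_Ico]; simp
      · calc ∫⁻ z in In m ∩ Set.Ioc (|x-y|) (x+y), ENNReal.ofReal (Kker α x y z * z ^ (2*α+1))
            ≤ ∫⁻ _ in In m ∩ Set.Ioc (|x-y|) (x+y), ENNReal.ofReal (E2 α n m y) := by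
              apply setLIntegral_mono measurable_const
              intro z hz
              exact ENNReal.ofReal_le_ofReal (g_le_E2 hα hn1 hxI hy hz.1 hz.2)
          _ = ENNReal.ofReal (E2 α n m y) * volume (In m ∩ Set.Ioc (|x-y|) (x+y)) :=
              setLIntegral_const _ _
          _ ≤ ENNReal.ofReal (E2 α n m y) * volume (In m) := by
              gcongr; exact Set.inter_subset_left
          _ ≤ ENNReal.ofReal (E2 α n m y) := by
              rw [In, Real.volume_Ico]; simp
def KA (α : ℝ) : ℝ := CGamma α * 2^(2*α+2) * 6^(2*α-1)
def KC (α : ℝ) : ℝ := CGamma α * 2^(2*α+2) * 96^(α-1/2)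
def CS (α : ℝ) : ℝ := 3*2^(2*α+1)*C0 α + 5*(C0 α + KA α) + 5*KC α
def Cbig (α : ℝ) : ℝ := CS α * 2^(2*α+2)

lemma KA_pos (hα : 1/2 ≤ α) : 0 < KA α :=
  mul_pos (mul_pos (CGamma_pos hα) (Real.rpow_pos_of_pos two_pos _)) (Real.rpow_pos_of_pos (by norm_num) _)

lemma KC_pos (hα : 1/2 ≤ α) : 0 < KC α :=
  mul_pos (mul_pos (CGamma_pos hα) (Real.rpow_pos_of_pos two_pos _)) (Real.rpow_pos_of_pos (by norm_num) _)

lemma CS_pos (hα : 1/2 ≤ α) : 0 < CS α := by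
  have h1 := C0_pos hα; have h2 := KA_pos hα; have h3 := KC_pos hα
  have h4 : (0:ℝ) < 2^(2*α+1) := Real.rpow_pos_of_pos two_pos _
  rw [CS]; nlinarith

lemma Cbig_pos (hα : 1/2 ≤ α) : 0 < Cbig α :=
  mul_pos (CS_pos hα) (Real.rpow_pos_of_pos two_pos _)

lemma E2_nonneg (hα : 1/2 ≤ α) (n m : ℕ) {y : ℝ} (hy : 0 ≤ y) : 0 ≤ E2 α n m y := by
  rw [E2]
  have hb : (0:ℝ) ≤ 2*((m:ℝ)+1)*((n:ℝ)+y) := by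
    have h1 : (0:ℝ) ≤ (m:ℝ) := Nat.cast_nonneg m
    have h2 : (0:ℝ) ≤ (n:ℝ) := Nat.cast_nonneg n
    nlinarith
  have h1 : (0:ℝ) ≤ (m:ℝ) := Nat.cast_nonneg m
  exact div_nonneg (mul_nonneg (mul_nonneg (CGamma_pos hα).le (Real.rpow_nonneg hb _))
    (by linarith)) (Real.rpow_nonneg (by positivity) _)

lemma E1_nonneg (hα : 1/2 ≤ α) (n m : ℕ) {y : ℝ} (hy : 0 ≤ y) : 0 ≤ E1 α n m y := by
  rw [E1]
  have hb : (0:ℝ) ≤ 16*y^2*(((m:ℝ)+1)*(2*((n:ℝ)+y))) := by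
    have h1 : (0:ℝ) ≤ (m:ℝ) := Nat.cast_nonneg m
    have h2 : (0:ℝ) ≤ (n:ℝ) := Nat.cast_nonneg n
    exact mul_nonneg (by positivity) (mul_nonneg (by linarith) (by linarith))
  have h1 : (0:ℝ) ≤ (m:ℝ) := Nat.cast_nonneg m
  exact div_nonneg (mul_nonneg (mul_nonneg (CGamma_pos hα).le (Real.rpow_nonneg hb _))
    (by linarith)) (Real.rpow_nonneg (by positivity) _)

lemma termE2 (hα : 1/2 ≤ α) {n m : ℕ} {y : ℝ} (hn : 1 ≤ (n:ℝ)) (hny : (n:ℝ) ≤ 2*y) (hy : 0 < y) :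
    ((n:ℝ)+1)^(2*α+1) * E2 α n m y ≤ KA α * ((m:ℝ)+1)^(2*α) := by
  have hM1 : (1:ℝ) ≤ (m:ℝ)+1 := by have : (0:ℝ) ≤ (m:ℝ) := Nat.cast_nonneg m; linarith
  have hN0 : (0:ℝ) < (n:ℝ) := by linarith
  have hM0 : (0:ℝ) < (m:ℝ)+1 := by linarith
  have hCG := CGamma_pos (α := α) hα
  have e1 : (0:ℝ) ≤ 2*α-1 := by linarith
  have step1 : ((n:ℝ)+1)^(2*α+1) * E2 α n m y
      ≤ (2*(n:ℝ))^(2*α+1) * (CGamma α * (6*(((m:ℝ)+1)*y))^(2*α-1) * ((m:ℝ)+1) / (((n:ℝ)*y)^(2*α))) := by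
    apply mul_le_mul
    · exact Real.rpow_le_rpow (by linarith) (by linarith) (by linarith)
    · rw [E2]
      refine bound_mono hCG.le e1 ?_ ?_ hM0.le le_rfl
        (Real.rpow_pos_of_pos (by positivity) _) le_rfl
      · nlinarith
      · nlinarith
    · exact E2_nonneg hα n m hy.le
    · positivity
  have step2 : (2*(n:ℝ))^(2*α+1) * (CGamma α * (6*(((m:ℝ)+1)*y))^(2*α-1) * ((m:ℝ)+1) / (((n:ℝ)*y)^(2*α)))
      = (KA α * ((m:ℝ)+1)^(2*α)) * ((n:ℝ)/(2*y)) := by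
    rw [KA, Real.mul_rpow (by norm_num) hN0.le, Real.mul_rpow (by norm_num) (by positivity),
      Real.mul_rpow hM0.le hy.le, Real.mul_rpow hN0.le hy.le]
    have idN : (n:ℝ)^(2*α+1) = (n:ℝ)^(2*α)*(n:ℝ) := by rw [Real.rpow_add hN0, Real.rpow_one]
    have idM : ((m:ℝ)+1)^(2*α) = ((m:ℝ)+1)^(2*α-1)*((m:ℝ)+1) := by
      rw [← Real.rpow_add_one hM0.ne' (2*α-1)]; congr 1; ring
    have idy : y^(2*α) = y^(2*α-1)*y := by
      rw [← Real.rpow_add_one (ne_of_gt hy) (2*α-1)]; congr 1; ring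
    have id2 : (2:ℝ)^(2*α+2) = 2^(2*α+1)*2 := by
      rw [← Real.rpow_add_one (by norm_num : (2:ℝ) ≠ 0) (2*α+1)]; congr 1; ring
    rw [idN, idM, idy, id2]
    have h1 : (n:ℝ)^(2*α) ≠ 0 := ne_of_gt (Real.rpow_pos_of_pos hN0 _)
    have h2 : y^(2*α-1) ≠ 0 := ne_of_gt (Real.rpow_pos_of_pos hy _)
    have hy' : y ≠ 0 := ne_of_gt hy
    field_simp
  calc ((n:ℝ)+1)^(2*α+1) * E2 α n m y
      ≤ (KA α * ((m:ℝ)+1)^(2*α)) * ((n:ℝ)/(2*y)) := step1.trans (le_of_eq step2)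
    _ ≤ (KA α * ((m:ℝ)+1)^(2*α)) * 1 := by
        apply mul_le_mul_of_nonneg_left _ (mul_nonneg (KA_pos hα).le (Real.rpow_nonneg hM0.le _))
        rw [div_le_one (by linarith)]
        linarith
    _ = KA α * ((m:ℝ)+1)^(2*α) := mul_one _

lemma termE1 (hα : 1/2 ≤ α) {n m : ℕ} {y : ℝ} (hn : 1 ≤ (n:ℝ))
    (hnM : (n:ℝ) ≤ 2*((m:ℝ)+1)) (hyM : y ≤ (m:ℝ)+1) (hy : 0 < y) :
    ((n:ℝ)+1)^(2*α+1) * E1 α n m y ≤ KC α * ((m:ℝ)+1)^(2*α+1) / y := by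
  have hM1 : (1:ℝ) ≤ (m:ℝ)+1 := by have : (0:ℝ) ≤ (m:ℝ) := Nat.cast_nonneg m; linarith
  have hN0 : (0:ℝ) < (n:ℝ) := by linarith
  have hM0 : (0:ℝ) < (m:ℝ)+1 := by linarith
  have hCG := CGamma_pos (α := α) hα
  have e1 : (0:ℝ) ≤ α-1/2 := by linarith
  have step1 : ((n:ℝ)+1)^(2*α+1) * E1 α n m y
      ≤ (2*(n:ℝ))^(2*α+1) * (CGamma α * (96*((y*((m:ℝ)+1))^2))^(α-1/2) * ((m:ℝ)+1) / (((n:ℝ)*y)^(2*α))) := by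
    apply mul_le_mul
    · exact Real.rpow_le_rpow (by linarith) (by linarith) (by linarith)
    · rw [E1]
      refine bound_mono hCG.le e1 ?_ ?_ hM0.le le_rfl
        (Real.rpow_pos_of_pos (by positivity) _) le_rfl
      · exact mul_nonneg (by positivity) (mul_nonneg hM0.le (by linarith))
      · have h3M : (n:ℝ)+y ≤ 3*((m:ℝ)+1) := by linarith
        nlinarith [mul_le_mul_of_nonneg_left h3M (by positivity : (0:ℝ) ≤ 32*(y^2*((m:ℝ)+1)))]
    · exact E1_nonneg hα n m hy.le
    · positivity
  have step2 : (2*(n:ℝ))^(2*α+1) * (CGamma α * (96*((y*((m:ℝ)+1))^2))^(α-1/2) * ((m:ℝ)+1) / (((n:ℝ)*y)^(2*α)))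
      = (KC α * ((m:ℝ)+1)^(2*α+1) / y) * ((n:ℝ)/(2*((m:ℝ)+1))) := by
    rw [KC, Real.mul_rpow (by norm_num) hN0.le, Real.mul_rpow (by norm_num) (by positivity),
      sq_rpow (by positivity), show 2*(α-1/2) = 2*α-1 by ring,
      Real.mul_rpow hy.le hM0.le, Real.mul_rpow hN0.le hy.le]
    have idN : (n:ℝ)^(2*α+1) = (n:ℝ)^(2*α)*(n:ℝ) := by rw [Real.rpow_add hN0, Real.rpow_one]
    have idM : ((m:ℝ)+1)^(2*α+1) = ((m:ℝ)+1)^(2*α-1)*((m:ℝ)+1)*((m:ℝ)+1) := by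
      rw [← Real.rpow_add_one hM0.ne' (2*α-1), ← Real.rpow_add_one hM0.ne' (2*α-1+1)]
      congr 1; ring
    have idy : y^(2*α) = y^(2*α-1)*y := by
      rw [← Real.rpow_add_one (ne_of_gt hy) (2*α-1)]; congr 1; ring
    have id2 : (2:ℝ)^(2*α+2) = 2^(2*α+1)*2 := by
      rw [← Real.rpow_add_one (by norm_num : (2:ℝ) ≠ 0) (2*α+1)]; congr 1; ring
    rw [idN, idM, idy, id2]
    have h1 : (n:ℝ)^(2*α) ≠ 0 := ne_of_gt (Real.rpow_pos_of_pos hN0 _)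
    have h2 : y^(2*α-1) ≠ 0 := ne_of_gt (Real.rpow_pos_of_pos hy _)
    have hy' : y ≠ 0 := ne_of_gt hy
    field_simp
  calc ((n:ℝ)+1)^(2*α+1) * E1 α n m y
      ≤ (KC α * ((m:ℝ)+1)^(2*α+1) / y) * ((n:ℝ)/(2*((m:ℝ)+1))) := step1.trans (le_of_eq step2)
    _ ≤ (KC α * ((m:ℝ)+1)^(2*α+1) / y) * 1 := by
        apply mul_le_mul_of_nonneg_left _
          (div_nonneg (mul_nonneg (KC_pos hα).le (Real.rpow_nonneg hM0.le _)) hy.le)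
        rw [div_le_one (by linarith)]
        linarith
    _ = KC α * ((m:ℝ)+1)^(2*α+1) / y := mul_one _
lemma cB_le_C0 (hα : 1/2 ≤ α) (n m : ℕ) (y : ℝ) : cB α n m y ≤ ENNReal.ofReal (C0 α) := by
  rw [cB]
  split_ifs with h1 h2
  · exact le_rfl
  · exact min_le_left _ _
  · exact zero_le

lemma cB_eq_zero {n m : ℕ} {y : ℝ} (h : ¬ Cond n m y) : cB α n m y = 0 := by
  rw [cB, if_neg h]

lemma cB_le_E2 {n m : ℕ} {y : ℝ} (hc : Cond n m y) (hn : n ≠ 0) :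
    cB α n m y ≤ ENNReal.ofReal (E2 α n m y) := by
  rw [cB, if_pos hc, if_neg hn]
  exact (min_le_right _ _).trans (min_le_right _ _)

lemma cB_le_E1 {n m : ℕ} {y : ℝ} (hc : Cond n m y) (hn : n ≠ 0) :
    cB α n m y ≤ ENNReal.ofReal (E1 α n m y) := by
  rw [cB, if_pos hc, if_neg hn]
  exact (min_le_right _ _).trans (min_le_left _ _)

lemma tsum_le_card {h : ℕ → ℝ≥0∞} {s : Finset ℕ} {B : ℝ≥0∞}
    (h0 : ∀ n ∉ s, h n = 0) (hB : ∀ n ∈ s, h n ≤ B) : ∑' n, h n ≤ s.card * B := by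
  rw [tsum_eq_sum h0]
  calc ∑ n ∈ s, h n ≤ ∑ _n ∈ s, B := Finset.sum_le_sum hB
    _ = s.card * B := by rw [Finset.sum_const, nsmul_eq_mul]

lemma tsum_ite_card (s : Finset ℕ) (B : ℝ≥0∞) :
    ∑' n, (if n ∈ s then B else 0) = s.card * B := by
  rw [tsum_eq_sum (s := s) (fun n hn => if_neg hn),
    Finset.sum_congr rfl (fun n hn => if_pos hn), Finset.sum_const, nsmul_eq_mul]

lemma card_mul_le {k : ℕ} {c X B : ℝ} (hk : (k:ℝ) ≤ c) (hX : 0 ≤ X) (hXB : c * X ≤ B) :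
    (k:ℝ≥0∞) * ENNReal.ofReal X ≤ ENNReal.ofReal B := by
  calc (k:ℝ≥0∞) * ENNReal.ofReal X = ENNReal.ofReal ((k:ℝ) * X) := by
        rw [ENNReal.ofReal_mul (Nat.cast_nonneg k), ENNReal.ofReal_natCast]
    _ ≤ ENNReal.ofReal B := ENNReal.ofReal_le_ofReal ((mul_le_mul_of_nonneg_right hk hX).trans hXB)

lemma h0_le (hα : 1/2 ≤ α) (m : ℕ) (y : ℝ) :
    wn α 0 * cB α 0 m y ≤ ENNReal.ofReal (C0 α) := by
  have h1 : wn α 0 ≤ 1 := by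
    have := wn_le hα 0
    simpa [Real.one_rpow] using this
  calc wn α 0 * cB α 0 m y ≤ 1 * ENNReal.ofReal (C0 α) :=
        mul_le_mul' h1 (cB_le_C0 hα 0 m y)
    _ = ENNReal.ofReal (C0 α) := one_mul _

lemma h_le_E2 (hα : 1/2 ≤ α) {n m : ℕ} {y : ℝ} (hc : Cond n m y) (hn : n ≠ 0)
    (hny : (n:ℝ) ≤ 2*y) (hy : 0 < y) :
    wn α n * cB α n m y ≤ ENNReal.ofReal (KA α * ((m:ℝ)+1)^(2*α)) := by
  have hn1 : (1:ℝ) ≤ (n:ℝ) := by exact_mod_cast Nat.one_le_iff_ne_zero.mpr hn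
  calc wn α n * cB α n m y
      ≤ ENNReal.ofReal (((n:ℝ)+1)^(2*α+1)) * ENNReal.ofReal (E2 α n m y) :=
        mul_le_mul' (wn_le hα n) (cB_le_E2 hc hn)
    _ = ENNReal.ofReal (((n:ℝ)+1)^(2*α+1) * E2 α n m y) :=
        (ENNReal.ofReal_mul (by positivity)).symm
    _ ≤ ENNReal.ofReal (KA α * ((m:ℝ)+1)^(2*α)) :=
        ENNReal.ofReal_le_ofReal (termE2 hα hn1 hny hy)

lemma h_le_E1 (hα : 1/2 ≤ α) {n m : ℕ} {y : ℝ} (hc : Cond n m y) (hn : n ≠ 0)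
    (hnM : (n:ℝ) ≤ 2*((m:ℝ)+1)) (hyM : y ≤ (m:ℝ)+1) (hy : 0 < y) :
    wn α n * cB α n m y ≤ ENNReal.ofReal (KC α * ((m:ℝ)+1)^(2*α+1) / y) := by
  have hn1 : (1:ℝ) ≤ (n:ℝ) := by exact_mod_cast Nat.one_le_iff_ne_zero.mpr hn
  calc wn α n * cB α n m y
      ≤ ENNReal.ofReal (((n:ℝ)+1)^(2*α+1)) * ENNReal.ofReal (E1 α n m y) :=
        mul_le_mul' (wn_le hα n) (cB_le_E1 hc hn)
    _ = ENNReal.ofReal (((n:ℝ)+1)^(2*α+1) * E1 α n m y) :=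
        (ENNReal.ofReal_mul (by positivity)).symm
    _ ≤ ENNReal.ofReal (KC α * ((m:ℝ)+1)^(2*α+1) / y) :=
        ENNReal.ofReal_le_ofReal (termE1 hα hn1 hnM hyM hy)

lemma sum_cB (hα : 1/2 ≤ α) {y : ℝ} (hy : 0 < y) (m : ℕ) :
    ∑' n, wn α n * cB α n m y ≤ ENNReal.ofReal (Cbig α) * wn α m := by
  have hm0 : (0:ℝ) ≤ (m:ℝ) := Nat.cast_nonneg m
  have hM1 : (1:ℝ) ≤ (m:ℝ)+1 := by linarith
  have hM0 : (0:ℝ) < (m:ℝ)+1 := by linarith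
  have hC0 := C0_pos (α := α) hα
  have hKA := KA_pos (α := α) hα
  have hKC := KC_pos (α := α) hα
  have h2a1 : (0:ℝ) < 2^(2*α+1) := Real.rpow_pos_of_pos two_pos _
  have hMpow1 : ((m:ℝ)+1) ≤ ((m:ℝ)+1)^(2*α+1) := by
    calc ((m:ℝ)+1) = ((m:ℝ)+1)^(1:ℝ) := (Real.rpow_one _).symm
      _ ≤ ((m:ℝ)+1)^(2*α+1) := Real.rpow_le_rpow_of_exponent_le hM1 (by linarith)
  have hMM : ((m:ℝ)+1)*((m:ℝ)+1)^(2*α) = ((m:ℝ)+1)^(2*α+1) := by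
    rw [mul_comm, ← Real.rpow_add_one hM0.ne' (2*α)]
  have hMnn : (0:ℝ) ≤ ((m:ℝ)+1)^(2*α+1) := Real.rpow_nonneg hM0.le _
  have hM2nn : (0:ℝ) ≤ ((m:ℝ)+1)^(2*α) := Real.rpow_nonneg hM0.le _
  have conclude : ∀ {T : ℝ≥0∞} {D : ℝ}, 0 ≤ D → D ≤ CS α →
      T ≤ ENNReal.ofReal (D * ((m:ℝ)+1)^(2*α+1)) → T ≤ ENNReal.ofReal (Cbig α) * wn α m := by
    intro T D hD0 hDC hT
    refine hT.trans ?_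
    calc ENNReal.ofReal (D * ((m:ℝ)+1)^(2*α+1))
        ≤ ENNReal.ofReal (Cbig α * (((m:ℝ)+1)^(2*α+1)/2^(2*α+2))) := by
          apply ENNReal.ofReal_le_ofReal
          rw [Cbig]
          have h2 : (0:ℝ) < 2^(2*α+2) := Real.rpow_pos_of_pos two_pos _
          rw [show CS α * 2^(2*α+2) * (((m:ℝ)+1)^(2*α+1)/2^(2*α+2))
              = CS α * ((m:ℝ)+1)^(2*α+1) by field_simp]
          exact mul_le_mul_of_nonneg_right hDC hMnn
      _ = ENNReal.ofReal (Cbig α) * ENNReal.ofReal (((m:ℝ)+1)^(2*α+1)/2^(2*α+2)) :=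
          ENNReal.ofReal_mul (Cbig_pos hα).le
      _ ≤ ENNReal.ofReal (Cbig α) * wn α m := mul_le_mul_right (wn_ge hα m) _
  by_cases hy1 : y ≤ 1
  · -- small y : at most three intervals, crude bound
    have hsupp : ∀ n ∉ Finset.Icc (m-1) (m+1), wn α n * cB α n m y = 0 := by
      intro n hn
      rw [cB_eq_zero, mul_zero]
      intro hcnd
      apply hn
      simp only [Finset.mem_Icc]
      obtain ⟨h1, h2, _⟩ := hcnd
      constructor
      · have hr : (m:ℝ) < (n:ℝ)+2 := by linarith
        have : m < n+2 := by exact_mod_cast hr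
        omega
      · have hr : (n:ℝ) < (m:ℝ)+2 := by linarith
        have : n < m+2 := by exact_mod_cast hr
        omega
    have hB : ∀ n ∈ Finset.Icc (m-1) (m+1),
        wn α n * cB α n m y ≤ ENNReal.ofReal (2^(2*α+1)*((m:ℝ)+1)^(2*α+1)*C0 α) := by
      intro n hn
      simp only [Finset.mem_Icc] at hn
      calc wn α n * cB α n m y
          ≤ ENNReal.ofReal (((n:ℝ)+1)^(2*α+1)) * ENNReal.ofReal (C0 α) :=
            mul_le_mul' (wn_le hα n) (cB_le_C0 hα n m y)
        _ = ENNReal.ofReal (((n:ℝ)+1)^(2*α+1) * C0 α) := (ENNReal.ofReal_mul (by positivity)).symm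
        _ ≤ ENNReal.ofReal (2^(2*α+1)*((m:ℝ)+1)^(2*α+1)*C0 α) := by
            apply ENNReal.ofReal_le_ofReal
            apply mul_le_mul_of_nonneg_right _ hC0.le
            have hnm : (n:ℝ)+1 ≤ 2*((m:ℝ)+1) := by
              have h' : (n:ℝ) ≤ (m:ℝ)+1 := by exact_mod_cast hn.2
              linarith
            calc ((n:ℝ)+1)^(2*α+1) ≤ (2*((m:ℝ)+1))^(2*α+1) :=
                  Real.rpow_le_rpow (by positivity) hnm (by linarith)
              _ = 2^(2*α+1)*((m:ℝ)+1)^(2*α+1) := Real.mul_rpow (by norm_num) hM0.le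
    refine conclude (D := 3*(2^(2*α+1)*C0 α)) (by positivity) ?_
      (le_trans (tsum_le_card hsupp hB) (card_mul_le (c := 3) ?_ ?_ (le_of_eq (by ring))))
    · rw [CS]; nlinarith
    · have hcard : (Finset.Icc (m-1) (m+1)).card ≤ 3 := by
        rw [Nat.card_Icc]; omega
      exact_mod_cast Nat.cast_le.mpr hcard
    · positivity
  · push_neg at hy1
    have hF1 : 1 ≤ ⌊y⌋₊ := Nat.le_floor (by exact_mod_cast hy1.le)
    have hFy : ((⌊y⌋₊:ℕ):ℝ) ≤ y := Nat.floor_le (by linarith)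
    have hyF : y < ((⌊y⌋₊:ℕ):ℝ)+1 := Nat.lt_floor_add_one y
    by_cases hym : y ≤ (m:ℝ)+1
    · -- medium y
      have hdec : ∀ n, wn α n * cB α n m y ≤
          (if n ∈ Finset.Icc 0 ⌊y⌋₊ then ENNReal.ofReal (C0 α + KA α * ((m:ℝ)+1)^(2*α)) else 0)
          + (if n ∈ Finset.Icc (m-(⌊y⌋₊+1)) (m+1+⌊y⌋₊)
              then ENNReal.ofReal (KC α * ((m:ℝ)+1)^(2*α+1) / y) else 0) := by
        intro n
        by_cases hcnd : Cond n m y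
        swap
        · rw [cB_eq_zero hcnd, mul_zero]; exact zero_le
        by_cases hnF : n ≤ ⌊y⌋₊
        · have hmem : n ∈ Finset.Icc 0 ⌊y⌋₊ := Finset.mem_Icc.mpr ⟨Nat.zero_le n, hnF⟩
          rw [if_pos hmem]
          refine le_trans ?_ le_self_add
          rcases Nat.eq_zero_or_pos n with hn0 | hn1
          · subst hn0
            exact (h0_le hα m y).trans (ENNReal.ofReal_le_ofReal
              (by linarith [mul_nonneg hKA.le hM2nn]))
          · have hny : (n:ℝ) ≤ 2*y := by
              have : ((n:ℕ):ℝ) ≤ ((⌊y⌋₊:ℕ):ℝ) := by exact_mod_cast hnF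
              linarith
            refine (h_le_E2 hα hcnd (Nat.pos_iff_ne_zero.mp hn1) hny hy).trans
              (ENNReal.ofReal_le_ofReal (by linarith [hC0.le]))
        · have hn0 : n ≠ 0 := by omega
          have hmem : n ∈ Finset.Icc (m-(⌊y⌋₊+1)) (m+1+⌊y⌋₊) := by
            simp only [Finset.mem_Icc]
            obtain ⟨h1, h2, h3⟩ := hcnd
            constructor
            · have hr : (m:ℝ) < (n:ℝ)+((⌊y⌋₊:ℕ):ℝ)+2 := by linarith
              have : m < n+⌊y⌋₊+2 := by exact_mod_cast hr
              omega
            · have hr : (n:ℝ) < (m:ℝ)+((⌊y⌋₊:ℕ):ℝ)+2 := by linarith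
              have : n < m+⌊y⌋₊+2 := by exact_mod_cast hr
              omega
          rw [if_pos hmem]
          refine le_trans ?_ le_add_self
          exact h_le_E1 hα hcnd hn0 (by linarith [hcnd.2.1]) hym hy
      refine conclude (D := 2*(C0 α + KA α) + 5*KC α) (by positivity) ?_ ?_
      · rw [CS]; nlinarith
      calc ∑' n, wn α n * cB α n m y
          ≤ ∑' n, ((if n ∈ Finset.Icc 0 ⌊y⌋₊
                then ENNReal.ofReal (C0 α + KA α * ((m:ℝ)+1)^(2*α)) else 0)
              + (if n ∈ Finset.Icc (m-(⌊y⌋₊+1)) (m+1+⌊y⌋₊)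
                then ENNReal.ofReal (KC α * ((m:ℝ)+1)^(2*α+1) / y) else 0)) :=
            ENNReal.tsum_le_tsum hdec
        _ = (Finset.Icc 0 ⌊y⌋₊).card * ENNReal.ofReal (C0 α + KA α * ((m:ℝ)+1)^(2*α))
            + (Finset.Icc (m-(⌊y⌋₊+1)) (m+1+⌊y⌋₊)).card
              * ENNReal.ofReal (KC α * ((m:ℝ)+1)^(2*α+1) / y) := by
            rw [ENNReal.tsum_add, tsum_ite_card, tsum_ite_card]
        _ ≤ ENNReal.ofReal ((2*(C0 α + KA α)) * ((m:ℝ)+1)^(2*α+1))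
            + ENNReal.ofReal ((5*KC α) * ((m:ℝ)+1)^(2*α+1)) := by
            apply add_le_add
            · refine card_mul_le (c := 2*y) ?_
                (add_nonneg hC0.le (mul_nonneg hKA.le hM2nn)) ?_
              · rw [Nat.card_Icc]
                have : ((⌊y⌋₊+1-0 : ℕ):ℝ) = ((⌊y⌋₊:ℕ):ℝ)+1 := by push_cast; ring
                rw [this]; linarith
              · have step : 2*y*(C0 α + KA α * ((m:ℝ)+1)^(2*α))
                    ≤ 2*((m:ℝ)+1)*(C0 α + KA α * ((m:ℝ)+1)^(2*α)) := by
                  apply mul_le_mul_of_nonneg_right (by linarith)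
                    (add_nonneg hC0.le (mul_nonneg hKA.le hM2nn))
                refine step.trans ?_
                have e : 2*((m:ℝ)+1)*(C0 α + KA α * ((m:ℝ)+1)^(2*α))
                    = 2*C0 α*((m:ℝ)+1) + 2*KA α*(((m:ℝ)+1)*((m:ℝ)+1)^(2*α)) := by ring
                rw [e, hMM]
                have h5 : C0 α * ((m:ℝ)+1) ≤ C0 α * ((m:ℝ)+1)^(2*α+1) :=
                  mul_le_mul_of_nonneg_left hMpow1 hC0.le
                linarith
            · refine card_mul_le (c := 5*y) ?_ (by positivity) ?_
              · rw [Nat.card_Icc]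
                have hcard : m+1+⌊y⌋₊+1-(m-(⌊y⌋₊+1)) ≤ 2*⌊y⌋₊+3 := by omega
                have hc2 : ((m+1+⌊y⌋₊+1-(m-(⌊y⌋₊+1)) : ℕ):ℝ) ≤ ((2*⌊y⌋₊+3 : ℕ):ℝ) :=
                  Nat.cast_le.mpr hcard
                refine hc2.trans ?_
                push_cast
                linarith
              · rw [show 5*y*(KC α * ((m:ℝ)+1)^(2*α+1) / y)
                    = 5*KC α * ((m:ℝ)+1)^(2*α+1) * (y/y) by ring, div_self hy.ne']
                rw [mul_one]
        _ = ENNReal.ofReal ((2*(C0 α + KA α)) * ((m:ℝ)+1)^(2*α+1)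
              + (5*KC α) * ((m:ℝ)+1)^(2*α+1)) := by
            rw [ENNReal.ofReal_add (mul_nonneg (by linarith) hMnn) (mul_nonneg (by linarith) hMnn)]
        _ = ENNReal.ofReal ((2*(C0 α + KA α) + 5*KC α) * ((m:ℝ)+1)^(2*α+1)) := by
            congr 1; ring
    · -- large y
      push_neg at hym
      have hFm : m+1 ≤ ⌊y⌋₊ := Nat.le_floor (by push_cast; linarith)
      have hsupp : ∀ n ∉ Finset.Icc (⌊y⌋₊-(m+1)) (m+1+⌊y⌋₊), wn α n * cB α n m y = 0 := by
        intro n hn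
        rw [cB_eq_zero, mul_zero]
        intro hcnd
        apply hn
        simp only [Finset.mem_Icc]
        obtain ⟨h1, h2, h3⟩ := hcnd
        constructor
        · have hr : ((⌊y⌋₊:ℕ):ℝ) < (n:ℝ)+(m:ℝ)+2 := by linarith
          have : ⌊y⌋₊ < n+m+2 := by exact_mod_cast hr
          omega
        · have hr : (n:ℝ) < (m:ℝ)+((⌊y⌋₊:ℕ):ℝ)+2 := by linarith
          have : n < m+⌊y⌋₊+2 := by exact_mod_cast hr
          omega
      have hB : ∀ n ∈ Finset.Icc (⌊y⌋₊-(m+1)) (m+1+⌊y⌋₊),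
          wn α n * cB α n m y ≤ ENNReal.ofReal (C0 α + KA α * ((m:ℝ)+1)^(2*α)) := by
        intro n _
        by_cases hcnd : Cond n m y
        swap
        · rw [cB_eq_zero hcnd, mul_zero]; exact zero_le
        rcases Nat.eq_zero_or_pos n with hn0 | hn1
        · subst hn0
          exact (h0_le hα m y).trans (ENNReal.ofReal_le_ofReal
            (by linarith [mul_nonneg hKA.le hM2nn]))
        · have hny : (n:ℝ) ≤ 2*y := by linarith [hcnd.2.1]
          exact (h_le_E2 hα hcnd (Nat.pos_iff_ne_zero.mp hn1) hny hy).trans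
            (ENNReal.ofReal_le_ofReal (by linarith [hC0.le]))
      refine conclude (D := 3*(C0 α + KA α)) (by positivity) ?_
        (le_trans (tsum_le_card hsupp hB) (card_mul_le (c := 3*((m:ℝ)+1)) ?_
          (add_nonneg hC0.le (mul_nonneg hKA.le hM2nn)) ?_))
      · rw [CS]; nlinarith
      · rw [Nat.card_Icc]
        have hcard : m+1+⌊y⌋₊+1-(⌊y⌋₊-(m+1)) ≤ 2*m+3 := by omega
        have hc2 : ((m+1+⌊y⌋₊+1-(⌊y⌋₊-(m+1)) : ℕ):ℝ) ≤ ((2*m+3 : ℕ):ℝ) := Nat.cast_le.mpr hcard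
        refine hc2.trans ?_
        push_cast
        linarith
      · have e : 3*((m:ℝ)+1)*(C0 α + KA α * ((m:ℝ)+1)^(2*α))
            = 3*C0 α*((m:ℝ)+1) + 3*KA α*(((m:ℝ)+1)*((m:ℝ)+1)^(2*α)) := by ring
        rw [e, hMM]
        have h5 : C0 α * ((m:ℝ)+1) ≤ C0 α * ((m:ℝ)+1)^(2*α+1) :=
          mul_le_mul_of_nonneg_left hMpow1 hC0.le
        linarith
def Af (f : ℝ → ℂ) (m : ℕ) : ℝ≥0∞ := ⨆ x ∈ In m, (‖f x‖₊ : ℝ≥0∞)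

lemma amalgam_eq' (f : ℝ → ℂ) : amalgamNorm α ⊤ 1 f = ∑' n, wn α n * Af f n := by
  rw [amalgam_eq]; rfl

lemma g_nonneg (hα : 1/2 ≤ α) {x y z : ℝ} (hx : 0 < x) (hy : 0 < y)
    (hz : z ∈ Set.Ioc (|x-y|) (x+y)) : 0 ≤ Kker α x y z * z ^ (2*α+1) := by
  have hz0 : 0 < z := lt_of_le_of_lt (abs_nonneg _) hz.1
  rw [g_eq hx hy hz0]
  have hza : (x-y)^2 ≤ z^2 := by
    rw [← sq_abs (x-y)]; exact pow_le_pow_left₀ (abs_nonneg _) hz.1.le 2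
  have hzb : z^2 ≤ (x+y)^2 := pow_le_pow_left₀ hz0.le hz.2 2
  have hP : 0 ≤ (z^2-(x-y)^2)*((x+y)^2-z^2) := mul_nonneg (by linarith) (by linarith)
  exact div_nonneg (mul_nonneg (mul_nonneg (CGamma_pos hα).le (Real.rpow_nonneg hP _)) hz0.le)
    (Real.rpow_nonneg (by positivity) _)

lemma tau_bound (hα : 1/2 ≤ α) {y : ℝ} (hy : 0 < y) (f : ℝ → ℂ) (n : ℕ) :
    (⨆ x ∈ In n, (‖tau α y f x‖₊ : ℝ≥0∞))
      ≤ (if n = 0 then Af f ⌊y⌋₊ else 0) + ∑' m, cB α n m y * Af f m := by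
  apply iSup₂_le
  intro x hx
  have hxn : ((n:ℝ) ≤ x ∧ x < (n:ℝ)+1) := hx
  by_cases hx0 : x = 0
  · have hn0 : n = 0 := by
      have h1 : (n:ℝ) ≤ 0 := hx0 ▸ hxn.1
      exact_mod_cast le_antisymm (by exact_mod_cast h1) (Nat.zero_le n)
    have htau : tau α y f x = f y := by
      rw [tau, if_neg hy.ne', if_pos hx0]
    rw [htau, hn0, if_pos rfl]
    refine le_trans ?_ le_self_add
    have hyIn : y ∈ In ⌊y⌋₊ := ⟨Nat.floor_le hy.le, Nat.lt_floor_add_one y⟩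
    exact le_iSup₂ (f := fun x (_ : x ∈ In ⌊y⌋₊) => (‖f x‖₊ : ℝ≥0∞)) y hyIn
  · have hx0' : 0 < x := lt_of_le_of_ne (le_trans (Nat.cast_nonneg n) hxn.1) (Ne.symm hx0)
    have htau : tau α y f x = ∫ z in |x-y|..(x+y), (Kker α x y z * z ^ (2*α+1)) • f z := by
      rw [tau, if_neg hy.ne', if_neg hx0]
    rw [htau]
    have hab : |x-y| ≤ x+y := abs_le.mpr ⟨by linarith, by linarith⟩
    have hcover : Set.Ioc (|x-y|) (x+y) = ⋃ m, (In m ∩ Set.Ioc (|x-y|) (x+y)) := by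
      apply Set.eq_of_subset_of_subset
      · intro z hz
        have hz0 : 0 < z := lt_of_le_of_lt (abs_nonneg _) hz.1
        exact Set.mem_iUnion.mpr ⟨⌊z⌋₊, ⟨Nat.floor_le hz0.le, Nat.lt_floor_add_one z⟩, hz⟩
      · exact Set.iUnion_subset fun m => Set.inter_subset_right
    refine le_trans ?_ le_add_self
    calc (‖∫ z in |x-y|..(x+y), (Kker α x y z * z ^ (2*α+1)) • f z‖₊ : ℝ≥0∞)
        = (‖∫ z in Set.Ioc (|x-y|) (x+y), (Kker α x y z * z ^ (2*α+1)) • f z‖₊ : ℝ≥0∞) := by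
          rw [intervalIntegral.integral_of_le hab]
      _ ≤ ∫⁻ z in Set.Ioc (|x-y|) (x+y), ‖(Kker α x y z * z ^ (2*α+1)) • f z‖₊ :=
          enorm_integral_le_lintegral_enorm _
      _ = ∫⁻ z in ⋃ m, (In m ∩ Set.Ioc (|x-y|) (x+y)),
            ‖(Kker α x y z * z ^ (2*α+1)) • f z‖₊ := by rw [← hcover]
      _ ≤ ∑' m, ∫⁻ z in In m ∩ Set.Ioc (|x-y|) (x+y),
            ‖(Kker α x y z * z ^ (2*α+1)) • f z‖₊ := lintegral_iUnion_le _ _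
      _ ≤ ∑' m, cB α n m y * Af f m := ?_
    apply ENNReal.tsum_le_tsum
    intro m
    calc ∫⁻ z in In m ∩ Set.Ioc (|x-y|) (x+y), ‖(Kker α x y z * z ^ (2*α+1)) • f z‖₊
        ≤ ∫⁻ z in In m ∩ Set.Ioc (|x-y|) (x+y),
            ENNReal.ofReal (Kker α x y z * z ^ (2*α+1)) * Af f m := by
          apply setLIntegral_mono ((meas_g hα x y).mul_const _)
          intro z hz
          rw [nnnorm_smul, ENNReal.coe_mul, ← enorm_eq_nnnorm,
            Real.enorm_eq_ofReal (g_nonneg hα hx0' hy hz.2)]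
          exact mul_le_mul_right (le_iSup₂ (f := fun w (_ : w ∈ In m) => (‖f w‖₊ : ℝ≥0∞)) z hz.1) _
      _ = (∫⁻ z in In m ∩ Set.Ioc (|x-y|) (x+y),
            ENNReal.ofReal (Kker α x y z * z ^ (2*α+1))) * Af f m :=
          lintegral_mul_const _ (meas_g hα x y)
      _ ≤ cB α n m y * Af f m := mul_le_mul_left (mass_le hα hx hx0' hy) _
end BK

open BK in
/-- Uniform boundedness of the hypergroup translation on `(L^∞, ℓ¹)`. -/
theorem translation_bounded_infty_one (α : ℝ) (hα : 1/2 ≤ α) :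
    ∃ C : ℝ, 0 < C ∧ ∀ y : ℝ, 0 ≤ y → ∀ f : ℝ → ℂ, Measurable f →
      amalgamNorm α ⊤ 1 f < ⊤ →
      amalgamNorm α ⊤ 1 (tau α y f) ≤ ENNReal.ofReal C * amalgamNorm α ⊤ 1 f := by
  have hCb := Cbig_pos (α := α) hα
  have h2p : (0:ℝ) < 2^(2*α+2) := Real.rpow_pos_of_pos two_pos _
  refine ⟨Cbig α + 2^(2*α+2) + 1, by linarith, ?_⟩
  intro y hy0 f _hf _hnorm
  rcases eq_or_lt_of_le hy0 with hy | hy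
  · have htau : tau α y f = f := by
      funext x; rw [tau, if_pos hy.symm]
    rw [htau]
    refine le_mul_of_one_le_left zero_le ?_
    rw [show (1:ℝ≥0∞) = ENNReal.ofReal 1 by simp]
    exact ENNReal.ofReal_le_ofReal (by linarith)
  · rw [amalgam_eq' (tau α y f), amalgam_eq' f]
    have hwn0 : wn α 0 ≤ ENNReal.ofReal (2^(2*α+2)) * wn α ⌊y⌋₊ := by
      have h1 : wn α 0 ≤ 1 := by
        have := wn_le hα 0
        simpa [Real.one_rpow] using this
      refine h1.trans ?_
      have h2 : ENNReal.ofReal ((((⌊y⌋₊:ℕ):ℝ)+1)^(2*α+1) / 2^(2*α+2)) ≤ wn α ⌊y⌋₊ :=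
        wn_ge hα ⌊y⌋₊
      have h3 : (1:ℝ) ≤ (((⌊y⌋₊:ℕ):ℝ)+1)^(2*α+1) := by
        have hb : (1:ℝ) ≤ ((⌊y⌋₊:ℕ):ℝ)+1 := by
          have : (0:ℝ) ≤ ((⌊y⌋₊:ℕ):ℝ) := Nat.cast_nonneg _
          linarith
        calc (1:ℝ) = (((⌊y⌋₊:ℕ):ℝ)+1)^(0:ℝ) := (Real.rpow_zero _).symm
          _ ≤ (((⌊y⌋₊:ℕ):ℝ)+1)^(2*α+1) := Real.rpow_le_rpow_of_exponent_le hb (by linarith)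
      calc (1:ℝ≥0∞) = ENNReal.ofReal (2^(2*α+2) * (1 / 2^(2*α+2))) := by
            rw [mul_one_div, div_self h2p.ne']; simp
        _ ≤ ENNReal.ofReal (2^(2*α+2) * ((((⌊y⌋₊:ℕ):ℝ)+1)^(2*α+1) / 2^(2*α+2))) := by
            apply ENNReal.ofReal_le_ofReal
            gcongr
        _ = ENNReal.ofReal (2^(2*α+2)) * ENNReal.ofReal ((((⌊y⌋₊:ℕ):ℝ)+1)^(2*α+1) / 2^(2*α+2)) :=
            ENNReal.ofReal_mul h2p.le
        _ ≤ ENNReal.ofReal (2^(2*α+2)) * wn α ⌊y⌋₊ := mul_le_mul_right h2 _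
    calc ∑' n, wn α n * Af (tau α y f) n
        ≤ ∑' n, wn α n * ((if n = 0 then Af f ⌊y⌋₊ else 0) + ∑' m, cB α n m y * Af f m) :=
          ENNReal.tsum_le_tsum fun n => mul_le_mul_right (tau_bound hα hy f n) _
      _ = (∑' n, wn α n * (if n = 0 then Af f ⌊y⌋₊ else 0))
          + ∑' n, wn α n * ∑' m, cB α n m y * Af f m := by
          simp_rw [mul_add]; exact ENNReal.tsum_add
      _ ≤ ENNReal.ofReal (2^(2*α+2)) * (∑' m, wn α m * Af f m)
          + ENNReal.ofReal (Cbig α) * (∑' m, wn α m * Af f m) := by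
          apply add_le_add
          · rw [tsum_eq_single 0 (fun n hn => by rw [if_neg hn, mul_zero])]
            rw [if_pos rfl]
            calc wn α 0 * Af f ⌊y⌋₊ ≤ (ENNReal.ofReal (2^(2*α+2)) * wn α ⌊y⌋₊) * Af f ⌊y⌋₊ :=
                  mul_le_mul_left hwn0 _
              _ = ENNReal.ofReal (2^(2*α+2)) * (wn α ⌊y⌋₊ * Af f ⌊y⌋₊) := mul_assoc _ _ _
              _ ≤ ENNReal.ofReal (2^(2*α+2)) * (∑' m, wn α m * Af f m) :=
                  mul_le_mul_right (ENNReal.le_tsum ⌊y⌋₊) _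
          · calc ∑' n, wn α n * ∑' m, cB α n m y * Af f m
                = ∑' n, ∑' m, wn α n * (cB α n m y * Af f m) :=
                  tsum_congr fun n => ENNReal.tsum_mul_left.symm
              _ = ∑' m, ∑' n, wn α n * (cB α n m y * Af f m) := ENNReal.tsum_comm
              _ = ∑' m, (∑' n, wn α n * cB α n m y) * Af f m := by
                  refine tsum_congr fun m => ?_
                  rw [← ENNReal.tsum_mul_right]
                  exact tsum_congr fun n => (mul_assoc _ _ _).symm
              _ ≤ ∑' m, (ENNReal.ofReal (Cbig α) * wn α m) * Af f m :=
                  ENNReal.tsum_le_tsum fun m => mul_le_mul_left (sum_cB hα hy m) _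
              _ = ENNReal.ofReal (Cbig α) * ∑' m, wn α m * Af f m := by
                  simp_rw [mul_assoc]
                  exact ENNReal.tsum_mul_left
      _ = (ENNReal.ofReal (2^(2*α+2)) + ENNReal.ofReal (Cbig α)) * (∑' m, wn α m * Af f m) :=
          (add_mul _ _ _).symm
      _ ≤ ENNReal.ofReal (Cbig α + 2^(2*α+2) + 1) * (∑' m, wn α m * Af f m) := by
          apply mul_le_mul_left
          rw [← ENNReal.ofReal_add h2p.le hCb.le]
          exact ENNReal.ofReal_le_ofReal (by linarith)
end
end

section
/- Key reduction for the (L^∞, ℓ¹) translation bound: there is a constant C > 0 (depending only on α) such that for every integer n ≥ 1 and every y ∈ ℝ₊ one has ‖τ_y 1_{[n−1,n)}‖_{∞,1} ≤ C·ω_n. -/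
open MeasureTheory Real Set ENNReal ComplexOrder

noncomputable section

section BKaux

lemma BK_CGamma_pos (α : ℝ) (hα : 1/2 ≤ α) : 0 < CGamma α := by
  have h1 : 0 < Real.Gamma (α+1) := Real.Gamma_pos_of_pos (by linarith)
  have h2 : 0 < Real.Gamma (1/2) := Real.Gamma_pos_of_pos (by norm_num)
  have h3 : 0 < Real.Gamma (α+1/2) := Real.Gamma_pos_of_pos (by linarith)
  have h4 : (0:ℝ) < (2:ℝ) ^ (2*α-1) := Real.rpow_pos_of_pos (by norm_num) _
  unfold CGamma; positivity

lemma BK_abs_sub_le (x y : ℝ) (hx : 0 ≤ x) (hy : 0 ≤ y) : |x - y| ≤ x + y :=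
  abs_le.2 ⟨by linarith, by linarith⟩

lemma BK_two_min (x y : ℝ) : x + y - |x - y| = 2 * min x y := by
  rcases le_total x y with h | h
  · rw [abs_of_nonpos (by linarith), min_eq_left h]; ring
  · rw [abs_of_nonneg (by linarith), min_eq_right h]; ring

lemma BK_support (α N x y : ℝ) (hx : 0 ≤ x) (hy : 0 ≤ y)
    (h : x + y < N - 1 ∨ N ≤ |x - y|) :
    tau α y ((Set.Ico (N-1) N).indicator (1 : ℝ → ℝ)) x = 0 := by
  rw [tau]
  split_ifs with h0 h1
  · subst h0
    apply Set.indicator_of_notMem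
    rintro ⟨hl, hr⟩
    rcases h with h | h
    · linarith
    · rw [sub_zero, abs_of_nonneg hx] at h; linarith
  · subst h1
    apply Set.indicator_of_notMem
    rintro ⟨hl, hr⟩
    rcases h with h | h
    · linarith
    · rw [zero_sub, abs_neg, abs_of_nonneg hy] at h; linarith
  · have hab : |x-y| ≤ x+y := BK_abs_sub_le x y hx hy
    rw [intervalIntegral.integral_of_le hab]
    have heq : Set.EqOn (fun z => (Kker α x y z * z ^ (2*α+1)) •
        ((Set.Ico (N-1) N).indicator (1 : ℝ → ℝ)) z) 0 (Set.Ioc (|x-y|) (x+y)) := by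
      intro z hz
      have hzI : z ∉ Set.Ico (N-1) N := by
        rintro ⟨hl, hr⟩
        rcases h with h | h
        · have := hz.2; linarith
        · have := hz.1; linarith
      simp [Set.indicator_of_notMem hzI]
    rw [MeasureTheory.setIntegral_congr_fun measurableSet_Ioc heq]
    simp

lemma BK_master {α : ℝ} (hα : 1/2 ≤ α) (N x y : ℝ) (hN : 1 ≤ N) (hx : 0 < x) (hy : 0 < y) :
    ‖tau α y ((Set.Ico (N-1) N).indicator (1 : ℝ → ℝ)) x‖ ≤
      CGamma α * ((min (N^2) (4*(x*y)) * min ((x+y)^2) (4*(x*y))) ^ (α-1/2) *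
        min N (x+y) / (x*y) ^ (2*α)) * min 1 (2 * min x y) := by
  have hp : (0:ℝ) ≤ α - 1/2 := by linarith
  have hxy : 0 < x*y := mul_pos hx hy
  have hCG := BK_CGamma_pos α hα
  set U := min (N^2) (4*(x*y)) with hU
  set V := min ((x+y)^2) (4*(x*y)) with hV
  have hU0 : 0 ≤ U := le_min (by positivity) (by positivity)
  have hV0 : 0 ≤ V := le_min (by positivity) (by positivity)
  set M := CGamma α * ((U * V) ^ (α-1/2) * min N (x+y) / (x*y) ^ (2*α)) with hM
  have hM0 : 0 ≤ M := by
    have h1 : 0 ≤ (U*V) ^ (α-1/2) := Real.rpow_nonneg (mul_nonneg hU0 hV0) _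
    have h2 : 0 ≤ min N (x+y) := le_min (by linarith) (by positivity)
    have := hCG.le
    positivity
  have hab : |x - y| ≤ x + y := BK_abs_sub_le x y hx.le hy.le
  rw [tau, if_neg hy.ne', if_neg hx.ne']
  have key : ∀ z ∈ Set.Ioc (|x-y|) (x+y),
      ‖(Kker α x y z * z ^ (2*α+1)) • ((Set.Ico (N-1) N).indicator (1 : ℝ → ℝ)) z‖ ≤
        (Set.Icc (N-1) N).indicator (fun _ => M) z := by
    intro z hz
    by_cases hzI : z ∈ Set.Ico (N-1) N
    · rw [Set.indicator_of_mem hzI, Set.indicator_of_mem (Set.Ico_subset_Icc_self hzI)]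
      have hz0 : 0 < z := lt_of_le_of_lt (abs_nonneg _) hz.1
      have hsq1 : |x-y|^2 ≤ z^2 := by
        have := pow_le_pow_left₀ (abs_nonneg (x-y)) hz.1.le 2
        exact this
      rw [sq_abs] at hsq1
      have hsq2 : z^2 ≤ (x+y)^2 := pow_le_pow_left₀ hz0.le hz.2 2
      have hu0 : 0 ≤ z^2 - (x-y)^2 := by linarith
      have hv0 : 0 ≤ (x+y)^2 - z^2 := by linarith
      have hzN : z ≤ N := hzI.2.le
      have hsq3 : z^2 ≤ N^2 := pow_le_pow_left₀ hz0.le hzN 2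
      have hu : z^2 - (x-y)^2 ≤ U := le_min (by nlinarith [sq_nonneg (x-y)]) (by nlinarith)
      have hv : (x+y)^2 - z^2 ≤ V := le_min (by nlinarith [sq_nonneg z]) (by nlinarith)
      have hrw : Kker α x y z * z ^ (2*α+1)
          = CGamma α * (((z^2 - (x-y)^2) * ((x+y)^2 - z^2)) ^ (α-1/2) * z / (x*y) ^ (2*α)) := by
        rw [Kker, show x*y*z = (x*y)*z by ring, Real.mul_rpow hxy.le hz0.le,
          Real.rpow_add hz0 (2*α) 1, Real.rpow_one]
        have h1 : ((x*y) : ℝ) ^ (2*α) ≠ 0 := (Real.rpow_pos_of_pos hxy _).ne'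
        have h2 : (z:ℝ) ^ (2*α) ≠ 0 := (Real.rpow_pos_of_pos hz0 _).ne'
        field_simp
      rw [smul_eq_mul, Pi.one_apply, mul_one, hrw]
      have h1 : 0 ≤ ((z^2 - (x-y)^2) * ((x+y)^2 - z^2)) ^ (α-1/2) :=
        Real.rpow_nonneg (mul_nonneg hu0 hv0) _
      have habs : 0 ≤ CGamma α *
          (((z^2 - (x-y)^2) * ((x+y)^2 - z^2)) ^ (α-1/2) * z / (x*y) ^ (2*α)) := by
        have := hCG.le
        positivity
      rw [Real.norm_eq_abs, abs_of_nonneg habs, hM]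
      gcongr
      · exact le_min hzN hz.2
    · rw [Set.indicator_of_notMem hzI, smul_zero, norm_zero]
      exact Set.indicator_nonneg (fun _ _ => hM0) z
  have step1 : ‖∫ z in |x-y|..(x+y), (Kker α x y z * z ^ (2*α+1)) •
      ((Set.Ico (N-1) N).indicator (1 : ℝ → ℝ)) z‖ ≤
      |∫ z in |x-y|..(x+y), (Set.Icc (N-1) N).indicator (fun _ => M) z| := by
    refine intervalIntegral.norm_integral_le_abs_of_norm_le ?_ ?_
    · rw [Set.uIoc_of_le hab]
      exact (ae_restrict_iff' measurableSet_Ioc).2 (Filter.Eventually.of_forall key)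
    · exact ((MeasureTheory.integrable_indicator_iff measurableSet_Icc).2
        ((integrableOn_const_iff (by simp)).2 (Or.inr measure_Icc_lt_top))).intervalIntegrable
  refine step1.trans ?_
  rw [intervalIntegral.integral_of_le hab,
    MeasureTheory.setIntegral_indicator measurableSet_Icc, MeasureTheory.setIntegral_const,
    smul_eq_mul]
  have hvol : (volume (Set.Ioc (|x-y|) (x+y) ∩ Set.Icc (N-1) N)).toReal ≤
      min 1 (2 * min x y) := by
    refine le_min ?_ ?_
    · refine ENNReal.toReal_le_of_le_ofReal zero_le_one ?_
      calc volume (Set.Ioc (|x-y|) (x+y) ∩ Set.Icc (N-1) N)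
          ≤ volume (Set.Icc (N-1) N) := measure_mono Set.inter_subset_right
        _ = ENNReal.ofReal 1 := by rw [Real.volume_Icc]; norm_num
    · refine ENNReal.toReal_le_of_le_ofReal (by positivity) ?_
      calc volume (Set.Ioc (|x-y|) (x+y) ∩ Set.Icc (N-1) N)
          ≤ volume (Set.Ioc (|x-y|) (x+y)) := measure_mono Set.inter_subset_left
        _ = ENNReal.ofReal (2 * min x y) := by rw [Real.volume_Ioc, BK_two_min]
  calc |(volume (Set.Ioc (|x-y|) (x+y) ∩ Set.Icc (N-1) N)).toReal * M|
      = (volume (Set.Ioc (|x-y|) (x+y) ∩ Set.Icc (N-1) N)).toReal * M := by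
        rw [abs_of_nonneg (mul_nonneg ENNReal.toReal_nonneg hM0)]
    _ ≤ min 1 (2 * min x y) * M := mul_le_mul_of_nonneg_right hvol hM0
    _ = M * min 1 (2 * min x y) := mul_comm _ _


lemma BK_sq_rpow (t : ℝ) (ht : 0 ≤ t) {α : ℝ} : (t^2) ^ (α-1/2) = t ^ (2*α-1) := by
  rw [← Real.rpow_natCast t 2, ← Real.rpow_mul ht]
  norm_num
  ring_nf

lemma BK_minU_nonneg (N x y : ℝ) (hN : 1 ≤ N) (hx : 0 < x) (hy : 0 < y) :
    0 ≤ min (N^2) (4*(x*y)) := le_min (by positivity) (by positivity)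

lemma BK_minV_nonneg (N x y : ℝ) (hx : 0 < x) (hy : 0 < y) :
    0 ≤ min ((x+y)^2) (4*(x*y)) := le_min (by positivity) (by positivity)

lemma BK_B0 {α : ℝ} (hα : 1/2 ≤ α) (N x y : ℝ) (hN : 1 ≤ N) (hx : 0 < x) (hy : 0 < y) :
    ‖tau α y ((Set.Ico (N-1) N).indicator (1 : ℝ → ℝ)) x‖ ≤ CGamma α * 4 ^ (2*α) := by
  refine (BK_master hα N x y hN hx hy).trans ?_
  have hxy := mul_pos hx hy
  have hCG := (BK_CGamma_pos α hα).le
  have hU0 := BK_minU_nonneg N x y hN hx hy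
  have hV0 := BK_minV_nonneg N x y hx hy
  have hp : (0:ℝ) ≤ α - 1/2 := by linarith
  have h1 : (min (N^2) (4*(x*y)) * min ((x+y)^2) (4*(x*y))) ^ (α-1/2) ≤
      (4*(x*y)) ^ (2*α-1) := by
    rw [← BK_sq_rpow (4*(x*y)) (by positivity)]
    refine Real.rpow_le_rpow (mul_nonneg hU0 hV0) ?_ hp
    have a1 := min_le_right (N^2) (4*(x*y))
    have a2 := min_le_right ((x+y)^2) (4*(x*y))
    nlinarith
  have h2 : 0 ≤ min N (x+y) := le_min (by linarith) (by positivity)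
  have h3 : (0:ℝ) < (x*y) ^ (2*α) := Real.rpow_pos_of_pos hxy _
  calc CGamma α * ((min (N^2) (4*(x*y)) * min ((x+y)^2) (4*(x*y))) ^ (α-1/2) *
        min N (x+y) / (x*y) ^ (2*α)) * min 1 (2 * min x y)
      ≤ CGamma α * ((4*(x*y)) ^ (2*α-1) * (x+y) / (x*y) ^ (2*α)) * (2 * min x y) := by
        gcongr
        · exact min_le_right _ _
        · exact min_le_right _ _
    _ ≤ CGamma α * 4 ^ (2*α) := by
        have hmm : (x+y) * (2 * min x y) ≤ 4*(x*y) := by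
          rcases le_total x y with h | h
          · rw [min_eq_left h]; nlinarith
          · rw [min_eq_right h]; nlinarith
        have e1 : (4*(x*y)) ^ (2*α-1) = 4 ^ (2*α-1) * (x*y) ^ (2*α-1) :=
          Real.mul_rpow (by norm_num) hxy.le
        have e2 : (x*y) ^ (2*α) = (x*y) ^ (2*α-1) * (x*y) := by
          have := Real.rpow_add hxy (2*α-1) 1
          rw [Real.rpow_one, show 2*α-1+1 = 2*α by ring] at this
          exact this
        have e3 : (4:ℝ) ^ (2*α) = 4 ^ (2*α-1) * 4 := by
          have := Real.rpow_add (by norm_num : (0:ℝ) < 4) (2*α-1) 1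
          rw [Real.rpow_one, show 2*α-1+1 = 2*α by ring] at this
          exact this
        have h4 : (0:ℝ) < (x*y) ^ (2*α-1) := Real.rpow_pos_of_pos hxy _
        calc CGamma α * ((4*(x*y)) ^ (2*α-1) * (x+y) / (x*y) ^ (2*α)) * (2 * min x y)
            = CGamma α * (4 ^ (2*α-1) / (x*y)) * ((x+y) * (2 * min x y)) := by
              rw [e1, e2]; field_simp
          _ ≤ CGamma α * (4 ^ (2*α-1) / (x*y)) * (4*(x*y)) := by
              have : (0:ℝ) ≤ CGamma α * (4 ^ (2*α-1) / (x*y)) := by positivity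
              exact mul_le_mul_of_nonneg_left hmm this
          _ = CGamma α * 4 ^ (2*α) := by rw [e3]; field_simp

lemma BK_B1 {α : ℝ} (hα : 1/2 ≤ α) (N x y : ℝ) (hN : 1 ≤ N) (hx : 0 < x) (hy : 0 < y) :
    ‖tau α y ((Set.Ico (N-1) N).indicator (1 : ℝ → ℝ)) x‖ ≤
      CGamma α * 4 ^ (2*α-1) * N / (x*y) := by
  refine (BK_master hα N x y hN hx hy).trans ?_
  have hxy := mul_pos hx hy
  have hCG := (BK_CGamma_pos α hα).le
  have hU0 := BK_minU_nonneg N x y hN hx hy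
  have hV0 := BK_minV_nonneg N x y hx hy
  have hp : (0:ℝ) ≤ α - 1/2 := by linarith
  have h1 : (min (N^2) (4*(x*y)) * min ((x+y)^2) (4*(x*y))) ^ (α-1/2) ≤
      (4*(x*y)) ^ (2*α-1) := by
    rw [← BK_sq_rpow (4*(x*y)) (by positivity)]
    refine Real.rpow_le_rpow (mul_nonneg hU0 hV0) ?_ hp
    have a1 := min_le_right (N^2) (4*(x*y))
    have a2 := min_le_right ((x+y)^2) (4*(x*y))
    nlinarith
  have h3 : (0:ℝ) < (x*y) ^ (2*α) := Real.rpow_pos_of_pos hxy _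
  have h4 : (0:ℝ) < (x*y) ^ (2*α-1) := Real.rpow_pos_of_pos hxy _
  calc CGamma α * ((min (N^2) (4*(x*y)) * min ((x+y)^2) (4*(x*y))) ^ (α-1/2) *
        min N (x+y) / (x*y) ^ (2*α)) * min 1 (2 * min x y)
      ≤ CGamma α * ((4*(x*y)) ^ (2*α-1) * N / (x*y) ^ (2*α)) * 1 := by
        gcongr
        · exact min_le_left _ _
        · exact min_le_left _ _
    _ = CGamma α * 4 ^ (2*α-1) * N / (x*y) := by
        have e1 : (4*(x*y)) ^ (2*α-1) = 4 ^ (2*α-1) * (x*y) ^ (2*α-1) :=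
          Real.mul_rpow (by norm_num) hxy.le
        have e2 : (x*y) ^ (2*α) = (x*y) ^ (2*α-1) * (x*y) := by
          have := Real.rpow_add hxy (2*α-1) 1
          rw [Real.rpow_one, show 2*α-1+1 = 2*α by ring] at this
          exact this
        rw [e1, e2]; field_simp

lemma BK_B2 {α : ℝ} (hα : 1/2 ≤ α) (N x y : ℝ) (hN : 1 ≤ N) (hx : 0 < x) (hy : 0 < y) :
    ‖tau α y ((Set.Ico (N-1) N).indicator (1 : ℝ → ℝ)) x‖ ≤
      CGamma α * N ^ (2*α) * (x+y) ^ (2*α-1) / (x*y) ^ (2*α) := by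
  refine (BK_master hα N x y hN hx hy).trans ?_
  have hxy := mul_pos hx hy
  have hCG := (BK_CGamma_pos α hα).le
  have hU0 := BK_minU_nonneg N x y hN hx hy
  have hV0 := BK_minV_nonneg N x y hx hy
  have hp : (0:ℝ) ≤ α - 1/2 := by linarith
  have hN0 : (0:ℝ) < N := by linarith
  have h1 : (min (N^2) (4*(x*y)) * min ((x+y)^2) (4*(x*y))) ^ (α-1/2) ≤
      N ^ (2*α-1) * (x+y) ^ (2*α-1) := by
    have e : (N^2 * (x+y)^2) ^ (α-1/2) = N ^ (2*α-1) * (x+y) ^ (2*α-1) := by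
      rw [Real.mul_rpow (by positivity) (by positivity), BK_sq_rpow N hN0.le,
        BK_sq_rpow (x+y) (by positivity)]
    rw [← e]
    refine Real.rpow_le_rpow (mul_nonneg hU0 hV0) ?_ hp
    have a1 := min_le_left (N^2) (4*(x*y))
    have a2 := min_le_left ((x+y)^2) (4*(x*y))
    have a3 : (0:ℝ) ≤ (x+y)^2 := by positivity
    nlinarith
  have h3 : (0:ℝ) < (x*y) ^ (2*α) := Real.rpow_pos_of_pos hxy _
  calc CGamma α * ((min (N^2) (4*(x*y)) * min ((x+y)^2) (4*(x*y))) ^ (α-1/2) *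
        min N (x+y) / (x*y) ^ (2*α)) * min 1 (2 * min x y)
      ≤ CGamma α * ((N ^ (2*α-1) * (x+y) ^ (2*α-1)) * N / (x*y) ^ (2*α)) * 1 := by
        gcongr
        · exact min_le_left _ _
        · exact min_le_left _ _
    _ = CGamma α * N ^ (2*α) * (x+y) ^ (2*α-1) / (x*y) ^ (2*α) := by
        have e2 : N ^ (2*α) = N ^ (2*α-1) * N := by
          have := Real.rpow_add hN0 (2*α-1) 1
          rw [Real.rpow_one, show 2*α-1+1 = 2*α by ring] at this
          exact this
        rw [e2]; ring


/-- auxiliary constants -/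
def BK_C3 (α : ℝ) : ℝ := max 1 (CGamma α * 4 ^ (2*α))

def BK_P1 (α : ℝ) : ℝ := CGamma α * 5^(2*α+1) * (4^(2*α-1) * 2^(2*α))

def BK_P2 (α : ℝ) : ℝ := CGamma α * 3^(2*α-1) * (2^(2*α) * 2^(2*α+1))

def BK_PC (α : ℝ) : ℝ := max (max (BK_P1 α) (BK_P2 α)) (BK_C3 α)

lemma BK_C3_pos (α : ℝ) : 0 < BK_C3 α := lt_of_lt_of_le one_pos (le_max_left _ _)

lemma BK_PC_pos (α : ℝ) : 0 < BK_PC α := lt_of_lt_of_le (BK_C3_pos α) (le_max_right _ _)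

lemma BK_C3_le_PC (α : ℝ) : BK_C3 α ≤ BK_PC α := le_max_right _ _

/-- bound including x = 0 -/
lemma BK_TC3 {α : ℝ} (hα : 1/2 ≤ α) (N x y : ℝ) (hN : 1 ≤ N) (hx : 0 ≤ x) (hy : 0 < y) :
    ‖tau α y ((Set.Ico (N-1) N).indicator (1 : ℝ → ℝ)) x‖ ≤ BK_C3 α := by
  rcases eq_or_lt_of_le hx with h | h
  · rw [tau, if_neg hy.ne', if_pos h.symm]
    refine le_trans (norm_indicator_le_norm_self (1 : ℝ → ℝ) y) ?_
    rw [Pi.one_apply, norm_one]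
    exact le_max_left _ _
  · exact (BK_B0 hα N x y hN h hy).trans (le_max_right _ _)

lemma BK_cellA {α : ℝ} (hα : 1/2 ≤ α) (N x y : ℝ) (hN : 1 ≤ N) (hy0 : 0 < y) (hy1 : y ≤ 1)
    (m : ℕ) (hmx : (m:ℝ) ≤ x) (hxm : x < (m:ℝ)+1) (hx0 : 0 ≤ x) :
    ((m:ℝ)+1)^(2*α+1) * ‖tau α y ((Set.Ico (N-1) N).indicator (1 : ℝ → ℝ)) x‖ ≤
      BK_C3 α * (3*N)^(2*α+1) := by
  have hC3 := (BK_C3_pos α).le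
  by_cases hg : tau α y ((Set.Ico (N-1) N).indicator (1 : ℝ → ℝ)) x = 0
  · rw [hg, norm_zero, mul_zero]; positivity
  · have hs : ¬(x + y < N - 1 ∨ N ≤ |x - y|) := fun h => hg (BK_support α N x y hx0 hy0.le h)
    push_neg at hs
    obtain ⟨h1, h2⟩ := hs
    have hxlt : x < N + y := by have := (abs_lt.1 h2).2; linarith
    have hm1 : (m:ℝ)+1 ≤ 3*N := by linarith
    have hb : (0:ℝ) ≤ (m:ℝ)+1 := by positivity
    have he : (0:ℝ) ≤ 2*α+1 := by linarith
    have := mul_le_mul (Real.rpow_le_rpow hb hm1 he)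
      (BK_TC3 hα N x y hN hx0 hy0) (norm_nonneg _) (Real.rpow_nonneg (by linarith) _)
    calc ((m:ℝ)+1)^(2*α+1) * ‖tau α y ((Set.Ico (N-1) N).indicator (1 : ℝ → ℝ)) x‖
        ≤ (3*N)^(2*α+1) * BK_C3 α := this
      _ = BK_C3 α * (3*N)^(2*α+1) := mul_comm _ _

lemma BK_cellB {α : ℝ} (hα : 1/2 ≤ α) (N x y : ℝ) (hN : 3 ≤ N) (hy1 : 1 < y) (hy2 : y ≤ N/2)
    (m : ℕ) (hmx : (m:ℝ) ≤ x) (hxm : x < (m:ℝ)+1) (hx0 : 0 ≤ x) :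
    ((m:ℝ)+1)^(2*α+1) * ‖tau α y ((Set.Ico (N-1) N).indicator (1 : ℝ → ℝ)) x‖ ≤
      (3*N)^(2*α+1) * (6*(CGamma α * 4^(2*α-1))/y) := by
  have hCG := (BK_CGamma_pos α hα).le
  have hy0 : (0:ℝ) < y := lt_trans one_pos hy1
  have hN1 : (1:ℝ) ≤ N := by linarith
  by_cases hg : tau α y ((Set.Ico (N-1) N).indicator (1 : ℝ → ℝ)) x = 0
  · rw [hg, norm_zero, mul_zero]; positivity
  · have hs : ¬(x + y < N - 1 ∨ N ≤ |x - y|) := fun h => hg (BK_support α N x y hx0 hy0.le h)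
    push_neg at hs
    obtain ⟨h1, h2⟩ := hs
    have hxlt : x < N + y := by have := (abs_lt.1 h2).2; linarith
    have hxge : N/6 ≤ x := by linarith
    have hx0' : (0:ℝ) < x := lt_of_lt_of_le (by linarith) hxge
    have hm1 : (m:ℝ)+1 ≤ 3*N := by linarith
    have hT : ‖tau α y ((Set.Ico (N-1) N).indicator (1 : ℝ → ℝ)) x‖ ≤
        6*(CGamma α * 4^(2*α-1))/y := by
      refine (BK_B1 hα N x y hN1 hx0' hy0).trans ?_
      have e : 6*(CGamma α * 4^(2*α-1))/y = CGamma α * 4^(2*α-1) * N / ((N/6)*y) := by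
        field_simp
      rw [e]
      have hd : (0:ℝ) < (N/6)*y := by positivity
      refine div_le_div_of_nonneg_left (by positivity) hd ?_
      exact mul_le_mul_of_nonneg_right hxge hy0.le
    have hb : (0:ℝ) ≤ (m:ℝ)+1 := by positivity
    have he : (0:ℝ) ≤ 2*α+1 := by linarith
    exact mul_le_mul (Real.rpow_le_rpow hb hm1 he) hT
      (norm_nonneg _) (Real.rpow_nonneg (by linarith) _)

lemma BK_cellC {α : ℝ} (hα : 1/2 ≤ α) (N x y : ℝ) (hN : 1 ≤ N) (hy1 : 1 < y) (hy2 : N/2 < y)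
    (m : ℕ) (hmx : (m:ℝ) ≤ x) (hxm : x < (m:ℝ)+1) (hx0 : 0 ≤ x) :
    ((m:ℝ)+1)^(2*α+1) * ‖tau α y ((Set.Ico (N-1) N).indicator (1 : ℝ → ℝ)) x‖ ≤
      BK_PC α * N^(2*α) := by
  have hCG := (BK_CGamma_pos α hα).le
  have hPC := (BK_PC_pos α).le
  have hy0 : (0:ℝ) < y := lt_trans one_pos hy1
  have hN0 : (0:ℝ) < N := by linarith
  have hNa : (1:ℝ) ≤ N^(2*α) := Real.one_le_rpow hN (by linarith)
  by_cases hg : tau α y ((Set.Ico (N-1) N).indicator (1 : ℝ → ℝ)) x = 0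
  · rw [hg, norm_zero, mul_zero]; positivity
  · have hs : ¬(x + y < N - 1 ∨ N ≤ |x - y|) := fun h => hg (BK_support α N x y hx0 hy0.le h)
    push_neg at hs
    obtain ⟨h1, h2⟩ := hs
    have hxlt : x - y < N := (abs_lt.1 h2).2
    have hylt : y - x < N := by have := (abs_lt.1 h2).1; linarith
    rcases lt_or_ge x 1 with hx1 | hx1
    · -- m = 0
      have hm0 : m = 0 := by
        have : (m:ℝ) < 1 := lt_of_le_of_lt hmx hx1
        exact_mod_cast Nat.lt_one_iff.1 (by exact_mod_cast this)
      subst hm0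
      rw [Nat.cast_zero, zero_add, Real.one_rpow, one_mul]
      calc ‖tau α y ((Set.Ico (N-1) N).indicator (1 : ℝ → ℝ)) x‖
          ≤ BK_C3 α := BK_TC3 hα N x y hN hx0 hy0
        _ = BK_C3 α * 1 := (mul_one _).symm
        _ ≤ BK_PC α * N^(2*α) :=
            mul_le_mul (BK_C3_le_PC α) hNa zero_le_one hPC
    · have hx0' : (0:ℝ) < x := lt_of_lt_of_le one_pos hx1
      have hNy : N < 2*y := by linarith
      rcases le_or_gt (y/2) x with hc | hc
      · -- x ≥ y/2
        have hxy4 : x + y ≤ 4*y := by linarith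
        have hm5 : (m:ℝ)+1 ≤ 5*y := by linarith
        have hT : ‖tau α y ((Set.Ico (N-1) N).indicator (1 : ℝ → ℝ)) x‖ ≤
            CGamma α * N^(2*α) * (4*y)^(2*α-1) / ((y/2)*y)^(2*α) := by
          refine (BK_B2 hα N x y hN hx0' hy0).trans ?_
          refine div_le_div₀ (by positivity) ?_ (by positivity) ?_
          · refine mul_le_mul_of_nonneg_left ?_ (by positivity)
            exact Real.rpow_le_rpow (by positivity) hxy4 (by linarith)
          · exact Real.rpow_le_rpow (by positivity) (by nlinarith) (by linarith)
        have hb : (0:ℝ) ≤ (m:ℝ)+1 := by positivity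
        have he : (0:ℝ) ≤ 2*α+1 := by linarith
        have step := mul_le_mul (Real.rpow_le_rpow hb hm5 he) hT
          (norm_nonneg _) (Real.rpow_nonneg (by positivity) _)
        refine step.trans ?_
        have e : (5*y)^(2*α+1) * (CGamma α * N^(2*α) * (4*y)^(2*α-1) / ((y/2)*y)^(2*α)) =
            BK_P1 α * N^(2*α) := by
          have ey : (y:ℝ) ^ (2*α+1) * y ^ (2*α-1) = y ^ (((2:ℕ):ℝ) * (2*α)) := by
            rw [← Real.rpow_add hy0]; congr 1; push_cast; ring
          have hyc : y ^ (((2:ℕ):ℝ)*(2*α)) ≠ 0 := (Real.rpow_pos_of_pos hy0 _).ne'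
          rw [Real.mul_rpow (by norm_num) hy0.le, Real.mul_rpow (by norm_num) hy0.le,
            show (y/2)*y = y^2/2 by ring, Real.div_rpow (by positivity) (by norm_num),
            ← Real.rpow_natCast y 2, ← Real.rpow_mul hy0.le]
          calc 5^(2*α+1) * y^(2*α+1) *
              (CGamma α * N^(2*α) * (4^(2*α-1) * y^(2*α-1)) / (y^(((2:ℕ):ℝ)*(2*α)) / 2^(2*α)))
              = (5^(2*α+1) * CGamma α * N^(2*α) * 4^(2*α-1) * 2^(2*α)) *
                (y^(2*α+1) * y^(2*α-1) / y^(((2:ℕ):ℝ)*(2*α))) := by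
                rw [div_div_eq_mul_div]; ring
            _ = (5^(2*α+1) * CGamma α * N^(2*α) * 4^(2*α-1) * 2^(2*α)) * 1 := by
                rw [ey, div_self hyc]
            _ = BK_P1 α * N^(2*α) := by rw [BK_P1]; ring
        rw [e]
        exact mul_le_mul_of_nonneg_right
          ((le_max_left _ _).trans (le_max_left _ _)) (by positivity)
      · -- x < y/2
        have hyN : y < 2*N := by linarith
        have hm1 : (1:ℝ) ≤ (m:ℝ) := by
          have : (1:ℝ) < (m:ℝ)+1 := lt_of_le_of_lt hx1 hxm
          have : (0:ℝ) < (m:ℝ) := by linarith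
          have : 0 < m := by exact_mod_cast this
          exact_mod_cast this
        have hm2x : (m:ℝ)+1 ≤ 2*x := by linarith
        have hT : ‖tau α y ((Set.Ico (N-1) N).indicator (1 : ℝ → ℝ)) x‖ ≤
            CGamma α * N^(2*α) * (3*N)^(2*α-1) / (x*(N/2))^(2*α) := by
          refine (BK_B2 hα N x y hN hx0' hy0).trans ?_
          refine div_le_div₀ (by positivity) ?_ (by positivity) ?_
          · refine mul_le_mul_of_nonneg_left ?_ (by positivity)
            exact Real.rpow_le_rpow (by positivity) (by linarith) (by linarith)
          · refine Real.rpow_le_rpow (by positivity) ?_ (by linarith)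
            nlinarith
        have hb : (0:ℝ) ≤ (m:ℝ)+1 := by positivity
        have he : (0:ℝ) ≤ 2*α+1 := by linarith
        have step := mul_le_mul (Real.rpow_le_rpow hb hm2x he) hT
          (norm_nonneg _) (Real.rpow_nonneg (by positivity) _)
        refine step.trans ?_
        have e : (2*x)^(2*α+1) * (CGamma α * N^(2*α) * (3*N)^(2*α-1) / (x*(N/2))^(2*α)) =
            (CGamma α * 3^(2*α-1) * (2^(2*α) * 2^(2*α+1))) * (N^(2*α-1) * x) := by
          rw [Real.mul_rpow (by norm_num) hx0'.le, Real.mul_rpow (by norm_num) hN0.le,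
            show x*(N/2) = (x*N)/2 by ring, Real.div_rpow (by positivity) (by norm_num),
            Real.mul_rpow hx0'.le hN0.le]
          have ex : x ^ (2*α+1) = x^(2*α) * x := by
            have := Real.rpow_add hx0' (2*α) 1
            rw [Real.rpow_one] at this
            rw [show 2*α+1 = 2*α+1 from rfl, ← this]
          have eN : N ^ (2*α) = N^(2*α-1) * N := by
            have := Real.rpow_add hN0 (2*α-1) 1
            rw [Real.rpow_one, show 2*α-1+1 = 2*α by ring] at this
            exact this
          rw [ex]
          have n1 : x ^ (2*α) ≠ 0 := (Real.rpow_pos_of_pos hx0' _).ne'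
          have n2 : N ^ (2*α) ≠ 0 := (Real.rpow_pos_of_pos hN0 _).ne'
          have n3 : (2:ℝ) ^ (2*α) ≠ 0 := (Real.rpow_pos_of_pos two_pos _).ne'
          field_simp
        rw [e]
        have eN2 : N^(2*α-1) * N = N^(2*α) := by
          have := Real.rpow_add hN0 (2*α-1) 1
          rw [Real.rpow_one, show 2*α-1+1 = 2*α by ring] at this
          exact this.symm
        calc (CGamma α * 3^(2*α-1) * (2^(2*α) * 2^(2*α+1))) * (N^(2*α-1) * x)
            ≤ (CGamma α * 3^(2*α-1) * (2^(2*α) * 2^(2*α+1))) * (N^(2*α-1) * N) := by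
              refine mul_le_mul_of_nonneg_left ?_ (by positivity)
              exact mul_le_mul_of_nonneg_left (by linarith) (by positivity)
          _ = BK_P2 α * N^(2*α) := by rw [eN2, BK_P2]
          _ ≤ BK_PC α * N^(2*α) := mul_le_mul_of_nonneg_right
              ((le_max_right _ _).trans (le_max_left _ _)) (by positivity)


lemma BK_wn_le {α : ℝ} (hα : 1/2 ≤ α) (m : ℕ) :
    wn α m ≤ ENNReal.ofReal (((m:ℝ)+1)^(2*α+1)) := by
  rw [wn, omegaM, In, withDensity_apply _ measurableSet_Ico,
    Measure.restrict_restrict measurableSet_Ico, ← In]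
  calc ∫⁻ z in In m ∩ Set.Ioi 0, ENNReal.ofReal (z^(2*α+1)) ∂volume
      ≤ ∫⁻ _ in In m ∩ Set.Ioi 0, ENNReal.ofReal (((m:ℝ)+1)^(2*α+1)) ∂volume := by
        refine setLIntegral_mono' (measurableSet_Ico.inter measurableSet_Ioi) ?_
        intro z hz
        apply ENNReal.ofReal_le_ofReal
        exact Real.rpow_le_rpow (le_of_lt hz.2) (le_of_lt hz.1.2) (by linarith)
    _ = ENNReal.ofReal (((m:ℝ)+1)^(2*α+1)) * volume (In m ∩ Set.Ioi 0) :=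
        setLIntegral_const _ _
    _ ≤ ENNReal.ofReal (((m:ℝ)+1)^(2*α+1)) * 1 := by
        refine mul_le_mul_right ?_ _
        calc volume (In m ∩ Set.Ioi 0) ≤ volume (In m) := measure_mono Set.inter_subset_left
          _ = 1 := by rw [In, Real.volume_Ico]; norm_num
    _ = ENNReal.ofReal (((m:ℝ)+1)^(2*α+1)) := mul_one _

lemma BK_wlow {α : ℝ} (hα : 1/2 ≤ α) (n : ℕ) (hn : 1 ≤ n) :
    ENNReal.ofReal ((n:ℝ)^(2*α+1) / 2^(2*α+2)) ≤
      omegaM α (Set.Ico ((n:ℝ)-1) (n:ℝ)) := by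
  have hN : (1:ℝ) ≤ (n:ℝ) := by exact_mod_cast hn
  set N := (n:ℝ) with hNdef
  rw [omegaM, withDensity_apply _ measurableSet_Ico,
    Measure.restrict_restrict measurableSet_Ico]
  have hsub : Set.Ico (N - 1/2) N ⊆ Set.Ico (N-1) N ∩ Set.Ioi 0 := by
    intro z hz
    exact ⟨⟨by linarith [hz.1], hz.2⟩, by simp only [Set.mem_Ioi]; linarith [hz.1]⟩
  have e1 : N^(2*α+1) / 2^(2*α+2) = (N/2)^(2*α+1) * (1/2) := by
    rw [Real.div_rpow (by linarith) (by norm_num)]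
    have : (2:ℝ)^(2*α+2) = 2^(2*α+1) * 2 := by
      have := Real.rpow_add (two_pos) (2*α+1) 1
      rw [Real.rpow_one, show 2*α+1+1 = 2*α+2 by ring] at this
      exact this
    rw [this]
    have h1 : ((2:ℝ))^(2*α+1) ≠ 0 := (Real.rpow_pos_of_pos two_pos _).ne'
    field_simp
  calc ENNReal.ofReal (N^(2*α+1) / 2^(2*α+2))
      = ENNReal.ofReal ((N/2)^(2*α+1)) * ENNReal.ofReal (1/2) := by
        rw [e1, ENNReal.ofReal_mul (by positivity)]
    _ = ENNReal.ofReal ((N/2)^(2*α+1)) * volume (Set.Ico (N - 1/2) N) := by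
        rw [Real.volume_Ico, show N - (N - 1/2) = 1/2 by ring]
    _ = ∫⁻ _ in Set.Ico (N - 1/2) N, ENNReal.ofReal ((N/2)^(2*α+1)) ∂volume :=
        (setLIntegral_const _ _).symm
    _ ≤ ∫⁻ z in Set.Ico (N - 1/2) N, ENNReal.ofReal (z^(2*α+1)) ∂volume := by
        refine setLIntegral_mono' measurableSet_Ico ?_
        intro z hz
        apply ENNReal.ofReal_le_ofReal
        exact Real.rpow_le_rpow (by linarith) (by linarith [hz.1]) (by linarith)
    _ ≤ ∫⁻ z in Set.Ico (N-1) N ∩ Set.Ioi 0, ENNReal.ofReal (z^(2*α+1)) ∂volume :=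
        lintegral_mono_set hsub

lemma BK_cell_lift {α : ℝ} (hα : 1/2 ≤ α) (y N : ℝ) (m : ℕ) (B : ℝ)
    (h : ∀ x, (m:ℝ) ≤ x → x < (m:ℝ)+1 →
      ((m:ℝ)+1)^(2*α+1) * ‖tau α y ((Set.Ico (N-1) N).indicator (1 : ℝ → ℝ)) x‖ ≤ B) :
    wn α m * (⨆ x ∈ In m, (‖tau α y ((Set.Ico (N-1) N).indicator (1 : ℝ → ℝ)) x‖₊ : ℝ≥0∞))
      ≤ ENNReal.ofReal B := by
  calc wn α m * (⨆ x ∈ In m, (‖tau α y ((Set.Ico (N-1) N).indicator (1 : ℝ → ℝ)) x‖₊ : ℝ≥0∞))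
      ≤ ENNReal.ofReal (((m:ℝ)+1)^(2*α+1)) *
        (⨆ x ∈ In m, (‖tau α y ((Set.Ico (N-1) N).indicator (1 : ℝ → ℝ)) x‖₊ : ℝ≥0∞)) :=
        mul_le_mul_left (BK_wn_le hα m) _
    _ ≤ ENNReal.ofReal B := by
        simp only [ENNReal.mul_iSup]
        refine iSup₂_le fun x hx => ?_
        rw [← enorm_eq_nnnorm, ← ofReal_norm, ← ENNReal.ofReal_mul (by positivity)]
        exact ENNReal.ofReal_le_ofReal (h x hx.1 hx.2)

end BKaux

/-- Key reduction for the `(L^∞, ℓ¹)` translation bound: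
`‖τ_y 1_{[n-1,n)}‖_{∞,1} ≤ C·ω_n`, uniformly in `n ≥ 1` and `y ≥ 0`. -/
theorem translation_indicator_bound (α : ℝ) (hα : 1/2 ≤ α) :
    ∃ C : ℝ, 0 < C ∧ ∀ n : ℕ, 1 ≤ n → ∀ y : ℝ, 0 ≤ y →
      amalgamNorm α ⊤ 1 (tau α y ((Set.Ico ((n:ℝ)-1) (n:ℝ)).indicator (1 : ℝ → ℝ))) ≤
        ENNReal.ofReal C * omegaM α (Set.Ico ((n:ℝ)-1) (n:ℝ)) := by
  classical
  have hCG := BK_CGamma_pos α hα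
  have hC3 := BK_C3_pos α
  have hPC := BK_PC_pos α
  set X1 : ℝ := 5*3^(2*α+1) * BK_C3 α with hX1
  set X2 : ℝ := 36*3^(2*α+1)*(CGamma α * 4^(2*α-1)) with hX2
  set X3 : ℝ := 4*BK_PC α with hX3
  set D := max (max X1 X2) X3 with hD
  have hX1pos : 0 < X1 := by rw [hX1]; positivity
  have hDpos : 0 < D := lt_of_lt_of_le hX1pos ((le_max_left _ _).trans (le_max_left _ _))
  refine ⟨max 1 (D * 2^(2*α+2)), lt_of_lt_of_le one_pos (le_max_left _ _), ?_⟩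
  intro n hn y hy
  have hN : (1:ℝ) ≤ (n:ℝ) := by exact_mod_cast hn
  set N := (n:ℝ) with hNdef
  have hN0 : (0:ℝ) < N := by linarith
  set g := tau α y ((Set.Ico (N-1) N).indicator (1 : ℝ → ℝ)) with hgdef
  have hA : amalgamNorm α ⊤ 1 g = ∑' m, wn α m * ⨆ x ∈ In m, (‖g x‖₊ : ℝ≥0∞) := by
    simp [amalgamNorm]
  rw [hA]
  have hC1 : (1:ℝ≥0∞) ≤ ENNReal.ofReal (max 1 (D * 2^(2*α+2))) := by
    rw [← ENNReal.ofReal_one]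
    exact ENNReal.ofReal_le_ofReal (le_max_left _ _)
  rcases eq_or_lt_of_le hy with hy0 | hy0
  · -- y = 0 : τ₀ f = f
    have hgx : ∀ x, g x = ((Set.Ico (N-1) N).indicator (1 : ℝ → ℝ)) x := by
      intro x; rw [hgdef, tau, if_pos hy0.symm]
    have hz : ∀ m : ℕ, m ∉ ({n-1} : Finset ℕ) →
        wn α m * (⨆ x ∈ In m, (‖g x‖₊ : ℝ≥0∞)) = 0 := by
      intro m hm
      have hg0 : ∀ x ∈ In m, g x = 0 := by
        intro x hx
        rw [hgx]
        apply Set.indicator_of_notMem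
        rintro ⟨hl, hr⟩
        apply hm
        simp only [Finset.mem_singleton]
        have hmn : (m:ℝ) < N := lt_of_le_of_lt hx.1 hr
        have hmn' : m < n := by rw [hNdef] at hmn; exact_mod_cast hmn
        have h2 : N - 1 < (m:ℝ)+1 := lt_of_le_of_lt hl hx.2
        have h2' : n < m + 2 := by
          have hlt : N < (m:ℝ)+2 := by linarith
          rw [hNdef] at hlt
          exact_mod_cast hlt
        omega
      have hsup : (⨆ x ∈ In m, (‖g x‖₊ : ℝ≥0∞)) = 0 := by
        refine le_antisymm (iSup₂_le fun x hx => ?_) (zero_le)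
        rw [hg0 x hx]; simp
      rw [hsup, mul_zero]
    rw [tsum_eq_sum hz, Finset.sum_singleton]
    have hsup1 : (⨆ x ∈ In (n-1), (‖g x‖₊ : ℝ≥0∞)) ≤ 1 := by
      refine iSup₂_le fun x hx => ?_
      rw [hgx, ← enorm_eq_nnnorm, ← ofReal_norm, ← ENNReal.ofReal_one]
      apply ENNReal.ofReal_le_ofReal
      refine le_trans (norm_indicator_le_norm_self (1:ℝ→ℝ) x) ?_
      rw [Pi.one_apply, norm_one]
    have hIn : In (n-1) = Set.Ico (N-1) N := by
      rw [In]
      have e : ((n-1 : ℕ):ℝ) = N - 1 := by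
        rw [Nat.cast_sub hn, Nat.cast_one]
      rw [e, show N - 1 + 1 = N by ring]
    calc wn α (n-1) * (⨆ x ∈ In (n-1), (‖g x‖₊:ℝ≥0∞))
        ≤ wn α (n-1) * 1 := mul_le_mul_right hsup1 _
      _ = omegaM α (Set.Ico (N-1) N) := by rw [mul_one, wn, hIn]
      _ ≤ ENNReal.ofReal (max 1 (D * 2^(2*α+2))) * omegaM α (Set.Ico (N-1) N) :=
          le_mul_of_one_le_left (zero_le) hC1
  · -- y > 0
    set L := max (y - N) (N - 1 - y) with hL
    set a := ⌊L⌋₊ with ha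
    set b := ⌊y + N⌋₊ + 1 with hb
    have hyN0 : (0:ℝ) ≤ y + N := by linarith
    have hbR : y + N < (b:ℝ) := by
      rw [hb]; push_cast; linarith [Nat.lt_floor_add_one (y+N)]
    have hgz : ∀ x : ℝ, 0 ≤ x → (x < L ∨ (b:ℝ) ≤ x) → g x = 0 := by
      intro x hx0 hcase
      rw [hgdef]
      apply BK_support α N x y hx0 hy0.le
      rcases hcase with hxL | hxb
      · rcases le_total (y - N) (N - 1 - y) with hm | hm
        · rw [hL, max_eq_right hm] at hxL
          left; linarith
        · rw [hL, max_eq_left hm] at hxL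
          right
          calc N ≤ y - x := by linarith
            _ ≤ |x - y| := by rw [abs_sub_comm]; exact le_abs_self _
      · right
        calc N ≤ x - y := by linarith
          _ ≤ |x - y| := le_abs_self _
    have hz : ∀ m : ℕ, m ∉ Finset.Ico a b →
        wn α m * (⨆ x ∈ In m, (‖g x‖₊:ℝ≥0∞)) = 0 := by
      intro m hm
      rw [Finset.mem_Ico] at hm
      push_neg at hm
      have hgm : ∀ x ∈ In m, g x = 0 := by
        intro x hx
        have hx0 : (0:ℝ) ≤ x := le_trans (Nat.cast_nonneg m) hx.1
        rcases lt_or_ge m a with hma | hab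
        · refine hgz x hx0 (Or.inl ?_)
          have h1 : m + 1 ≤ a := hma
          have hL1 : (1:ℝ) ≤ L := by
            have hapos : 0 < a := lt_of_le_of_lt (Nat.zero_le m) hma
            exact (Nat.floor_pos).1 hapos
          have h2 : (m:ℝ) + 1 ≤ L := by
            calc (m:ℝ)+1 ≤ (a:ℝ) := by exact_mod_cast h1
              _ ≤ L := Nat.floor_le (by linarith)
          linarith [hx.2]
        · have hmb : b ≤ m := hm hab
          refine hgz x hx0 (Or.inr ?_)
          calc (b:ℝ) ≤ (m:ℝ) := by exact_mod_cast hmb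
            _ ≤ x := hx.1
      have hsup : (⨆ x ∈ In m, (‖g x‖₊ : ℝ≥0∞)) = 0 := by
        refine le_antisymm (iSup₂_le fun x hx => ?_) (zero_le)
        rw [hgm x hx]; simp
      rw [hsup, mul_zero]
    rw [tsum_eq_sum hz]
    have haL : L < (a:ℝ) + 1 := Nat.lt_floor_add_one L
    have ha0 : (0:ℝ) ≤ (a:ℝ) := Nat.cast_nonneg a
    -- the common final step
    have final : ∀ K percell : ℝ, 0 ≤ percell → ((Finset.Ico a b).card : ℝ) ≤ K →
        (∀ m ∈ Finset.Ico a b, wn α m * (⨆ x ∈ In m, (‖g x‖₊:ℝ≥0∞)) ≤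
          ENNReal.ofReal percell) →
        K * percell ≤ D * N^(2*α+1) →
        (∑ m ∈ Finset.Ico a b, wn α m * (⨆ x ∈ In m, (‖g x‖₊:ℝ≥0∞))) ≤
          ENNReal.ofReal (max 1 (D * 2^(2*α+2))) * omegaM α (Set.Ico (N-1) N) := by
      intro K percell hper hcard hcell hKD
      have hK0 : (0:ℝ) ≤ K := le_trans (Nat.cast_nonneg _) hcard
      calc (∑ m ∈ Finset.Ico a b, wn α m * (⨆ x ∈ In m, (‖g x‖₊:ℝ≥0∞)))
          ≤ ∑ _m ∈ Finset.Ico a b, ENNReal.ofReal percell := Finset.sum_le_sum hcell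
        _ = ((Finset.Ico a b).card : ℕ) • ENNReal.ofReal percell := Finset.sum_const _
        _ = (((Finset.Ico a b).card : ℕ) : ℝ≥0∞) * ENNReal.ofReal percell := by
            rw [nsmul_eq_mul]
        _ ≤ ENNReal.ofReal K * ENNReal.ofReal percell := by
            refine mul_le_mul_left ?_ _
            rw [← ENNReal.ofReal_natCast]
            exact ENNReal.ofReal_le_ofReal hcard
        _ = ENNReal.ofReal (K * percell) := (ENNReal.ofReal_mul hK0).symm
        _ ≤ ENNReal.ofReal (D * N^(2*α+1)) := ENNReal.ofReal_le_ofReal hKD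
        _ ≤ ENNReal.ofReal (max 1 (D * 2^(2*α+2))) * omegaM α (Set.Ico (N-1) N) := by
            have h2ne : ((2:ℝ))^(2*α+2) ≠ 0 := (Real.rpow_pos_of_pos two_pos _).ne'
            have e : D * N^(2*α+1) = (D * 2^(2*α+2)) * (N^(2*α+1)/2^(2*α+2)) := by
              field_simp
            rw [e, ENNReal.ofReal_mul (by positivity)]
            exact mul_le_mul' (ENNReal.ofReal_le_ofReal (le_max_right _ _))
              (BK_wlow hα n hn)
    rcases le_or_gt y 1 with hy1 | hy1
    · -- Case A : 0 < y ≤ 1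
      refine final 5 (BK_C3 α * (3*N)^(2*α+1)) (by positivity) ?_ ?_ ?_
      · rw [Nat.card_Ico]
        have hba : b ≤ a + 5 := by
          have hfl : ⌊y + N⌋₊ < a + 5 := by
            rw [Nat.floor_lt hyN0]
            push_cast
            rcases lt_or_ge L 1 with hL1 | hL1
            · have h2 := (max_lt_iff.1 hL1).2
              linarith
            · have h2 : N - 1 - y ≤ L := le_max_right _ _
              linarith
          omega
        have : b - a ≤ 5 := by omega
        exact_mod_cast this
      · intro m _
        exact BK_cell_lift hα y N m _ (fun x h1 h2 =>
          BK_cellA hα N x y hN hy0 hy1 m h1 h2 (le_trans (Nat.cast_nonneg m) h1))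
      · have e3 : (3*N)^(2*α+1) = 3^(2*α+1) * N^(2*α+1) :=
          Real.mul_rpow (by norm_num) (by linarith)
        have hX1D : X1 ≤ D := (le_max_left _ _).trans (le_max_left _ _)
        calc 5 * (BK_C3 α * (3*N)^(2*α+1)) = X1 * N^(2*α+1) := by
              rw [e3, hX1]; ring
          _ ≤ D * N^(2*α+1) := mul_le_mul_of_nonneg_right hX1D (by positivity)
    · rcases le_or_gt y (N/2) with hy2 | hy2
      · -- Case B : 1 < y ≤ N/2
        have hN3 : (3:ℝ) ≤ N := by
          have h2 : (2:ℝ) < (n:ℝ) := by linarith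
          have h2' : 2 < n := by exact_mod_cast h2
          have h3 : 3 ≤ n := by omega
          rw [hNdef]
          exact_mod_cast h3
        refine final (2*y+4) ((3*N)^(2*α+1) * (6*(CGamma α * 4^(2*α-1))/y))
          (by positivity) ?_ ?_ ?_
        · rw [Nat.card_Ico]
          have hba : b ≤ a + (⌊2*y⌋₊ + 4) := by
            have hfl : ⌊y + N⌋₊ < a + (⌊2*y⌋₊ + 4) := by
              rw [Nat.floor_lt hyN0]
              push_cast
              have h2 : N - 1 - y ≤ L := le_max_right _ _
              have h3 : 2*y - 1 < (⌊2*y⌋₊:ℝ) := by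
                linarith [Nat.lt_floor_add_one (2*y)]
              linarith
            omega
          calc ((b - a:ℕ):ℝ) ≤ ((⌊2*y⌋₊ + 4 : ℕ):ℝ) := by
                have : b - a ≤ ⌊2*y⌋₊ + 4 := by omega
                exact_mod_cast this
            _ ≤ 2*y+4 := by
                push_cast
                linarith [Nat.floor_le (by positivity : (0:ℝ) ≤ 2*y)]
        · intro m _
          exact BK_cell_lift hα y N m _ (fun x h1 h2 =>
            BK_cellB hα N x y hN3 hy1 hy2 m h1 h2 (le_trans (Nat.cast_nonneg m) h1))
        · have e3 : (3*N)^(2*α+1) = 3^(2*α+1) * N^(2*α+1) :=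
            Real.mul_rpow (by norm_num) (by linarith)
          have hX2D : X2 ≤ D := (le_max_right _ _).trans (le_max_left _ _)
          have hyne : y ≠ 0 := by linarith
          calc (2*y+4) * ((3*N)^(2*α+1) * (6*(CGamma α * 4^(2*α-1))/y))
              ≤ (6*y) * ((3*N)^(2*α+1) * (6*(CGamma α * 4^(2*α-1))/y)) := by
                refine mul_le_mul_of_nonneg_right (by linarith) (by positivity)
            _ = X2 * N^(2*α+1) := by
                rw [e3, hX2]; field_simp; ring
            _ ≤ D * N^(2*α+1) := mul_le_mul_of_nonneg_right hX2D (by positivity)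
      · -- Case C : y > 1, y > N/2
        refine final (2*N+2) (BK_PC α * N^(2*α)) (by positivity) ?_ ?_ ?_
        · rw [Nat.card_Ico]
          have hba : b ≤ a + (2*n+2) := by
            have hfl : ⌊y + N⌋₊ < a + (2*n+2) := by
              rw [Nat.floor_lt hyN0]
              push_cast
              rcases le_or_gt N y with hNy | hNy
              · have h2 : y - N ≤ L := le_max_left _ _
                linarith
              · linarith
            omega
          calc ((b - a:ℕ):ℝ) ≤ ((2*n+2 : ℕ):ℝ) := by
                have : b - a ≤ 2*n+2 := by omega
                exact_mod_cast this
            _ = 2*N+2 := by push_cast; ring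
        · intro m _
          exact BK_cell_lift hα y N m _ (fun x h1 h2 =>
            BK_cellC hα N x y hN hy1 hy2 m h1 h2 (le_trans (Nat.cast_nonneg m) h1))
        · have eN : N^(2*α) * N = N^(2*α+1) := by
            have := Real.rpow_add hN0 (2*α) 1
            rw [Real.rpow_one] at this
            rw [← this]
          have hX3D : X3 ≤ D := le_max_right _ _
          calc (2*N+2) * (BK_PC α * N^(2*α))
              ≤ (4*N) * (BK_PC α * N^(2*α)) := by
                refine mul_le_mul_of_nonneg_right (by linarith) (by positivity)
            _ = X3 * (N^(2*α) * N) := by rw [hX3]; ring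
            _ = X3 * N^(2*α+1) := by rw [eN]
            _ ≤ D * N^(2*α+1) := mul_le_mul_of_nonneg_right hX3D (by positivity)
end
end
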